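/- arXiv:2405.18947 — 6 statements merged into one kernel-verified Lean document; each statement's English description precedes it below -/
import Mathlib

section
/- Let X be a Banach lattice and S, T : X → X linear operators such that |S x| ≤ T x for every x ≥ 0. Then S and T are bounded and ‖Sⁿ‖ ≤ ‖Tⁿ‖ for every natural number n. -/
section Aux

variable {X : Type*} [NormedAddCommGroup X] [Lattice X] [HasSolidNorm X]
    [IsOrderedAddMonoid X] [NormedSpace ℝ X]

/-- In a normed lattice group that is a real normed space, nonnegative real scalar
multiples of nonnegative elements are nonnegative. -/
lemma real_smul_nonneg {c : ℝ} (hc : 0 ≤ c) {x : X} (hx : 0 ≤ x) : 0 ≤ c • x := by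
  -- first, inverse powers of two
  have h2 : ∀ k : ℕ, 0 ≤ ((2 : ℝ) ^ k)⁻¹ • x := by
    intro k
    induction k with
    | zero => simpa using hx
    | succ k ih =>
      apply nsmul_two_semiclosed
      have h : (2 : ℕ) • (((2 : ℝ) ^ (k + 1))⁻¹ • x) = ((2 : ℝ) ^ k)⁻¹ • x := by
        rw [← Nat.cast_smul_eq_nsmul ℝ, smul_smul]
        congr 1
        rw [pow_succ, mul_inv]
        push_cast
        field_simp
      rw [h]
      exact ih
  -- then, dyadic rationals
  have hdy : ∀ m k : ℕ, 0 ≤ ((m : ℝ) / 2 ^ k) • x := by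
    intro m k
    have h : ((m : ℝ) / 2 ^ k) • x = m • (((2 : ℝ) ^ k)⁻¹ • x) := by
      rw [← Nat.cast_smul_eq_nsmul ℝ, smul_smul, div_eq_mul_inv]
    rw [h]
    exact nsmul_nonneg (h2 k) m
  -- approximate c by dyadics from below
  set f : ℕ → ℝ := fun k => (⌊c * 2 ^ k⌋₊ : ℝ) / 2 ^ k with hf
  have hle : ∀ k, f k ≤ c := by
    intro k
    rw [hf, div_le_iff₀ (by positivity)]
    exact Nat.floor_le (by positivity)
  have hge : ∀ k, c - ((2 : ℝ)⁻¹) ^ k ≤ f k := by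
    intro k
    have h1 : c * 2 ^ k < (⌊c * 2 ^ k⌋₊ : ℝ) + 1 := Nat.lt_floor_add_one _
    have h2k : (0 : ℝ) < 2 ^ k := by positivity
    rw [hf, sub_le_iff_le_add]
    rw [div_add' _ _ _ (ne_of_gt h2k), le_div_iff₀ h2k, inv_pow]
    have h3 : ((2 : ℝ) ^ k)⁻¹ * 2 ^ k = 1 := inv_mul_cancel₀ (ne_of_gt h2k)
    nlinarith [h1, h2k, h3]
  have htend : Filter.Tendsto f Filter.atTop (nhds c) := by
    have hlow : Filter.Tendsto (fun k : ℕ => c - ((2 : ℝ)⁻¹) ^ k) Filter.atTop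
        (nhds (c - 0)) :=
      Filter.Tendsto.sub tendsto_const_nhds
        (tendsto_pow_atTop_nhds_zero_of_lt_one (by norm_num) (by norm_num))
    rw [sub_zero] at hlow
    exact tendsto_of_tendsto_of_tendsto_of_le_of_le hlow tendsto_const_nhds hge hle
  have htend2 : Filter.Tendsto (fun k => f k • x) Filter.atTop (nhds (c • x)) :=
    htend.smul tendsto_const_nhds
  exact ge_of_tendsto' htend2 fun k => hdy ⌊c * 2 ^ k⌋₊ k

variable [CompleteSpace X]

/-- Lotz: a positive linear operator on a Banach lattice is bounded on the positive cone. -/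
lemma positive_bounded (T : X →ₗ[ℝ] X) (hT : ∀ x : X, 0 ≤ x → 0 ≤ T x) :
    ∃ M : ℝ, ∀ x : X, 0 ≤ x → ‖T x‖ ≤ M * ‖x‖ := by
  by_contra hcon
  push_neg at hcon
  have hx : ∀ n : ℕ, ∃ x : X, 0 ≤ x ∧ ((n : ℝ) * 2 ^ n) * ‖x‖ < ‖T x‖ := fun n => hcon _
  choose x hx0 hxT using hx
  have hxne : ∀ n, ‖x n‖ ≠ 0 := by
    intro n hn
    have h0 : x n = 0 := norm_eq_zero.mp hn
    have := hxT n
    rw [h0] at this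
    simp at this
  set u : ℕ → X := fun n => (((2 : ℝ)⁻¹) ^ n * ‖x n‖⁻¹) • x n with hu
  have hupos : ∀ n, 0 ≤ u n := fun n => real_smul_nonneg (by positivity) (hx0 n)
  have hunorm : ∀ n, ‖u n‖ = ((2 : ℝ)⁻¹) ^ n := by
    intro n
    rw [hu]
    simp only [norm_smul, Real.norm_eq_abs]
    rw [abs_of_nonneg (by positivity), mul_assoc, inv_mul_cancel₀ (hxne n), mul_one]
  have hsum : Summable u := by
    apply Summable.of_norm
    simp only [hunorm]
    exact summable_geometric_of_lt_one (by norm_num) (by norm_num)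
  set s := ∑' n, u n with hs
  have hmono : ∀ a b : X, a ≤ b → T a ≤ T b := by
    intro a b hab
    have h0 := hT (b - a) (sub_nonneg.mpr hab)
    rw [map_sub] at h0
    exact sub_nonneg.mp h0
  have hles : ∀ n, u n ≤ s := fun n => Summable.le_tsum hsum n fun j _ => hupos j
  have hlt : ∀ n : ℕ, (n : ℝ) < ‖T s‖ := by
    intro n
    have h1 : ‖T (u n)‖ ≤ ‖T s‖ := by
      apply norm_le_norm_of_abs_le_abs
      rw [abs_of_nonneg (hT _ (hupos n)), abs_of_nonneg (hT s ((hupos n).trans (hles n)))]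
      exact hmono _ _ (hles n)
    have h2 : (n : ℝ) < ‖T (u n)‖ := by
      have he : T (u n) = (((2 : ℝ)⁻¹) ^ n * ‖x n‖⁻¹) • T (x n) := by
        rw [hu]; simp [map_smul]
      rw [he, norm_smul, Real.norm_eq_abs, abs_of_nonneg (by positivity)]
      have heq : (((2 : ℝ)⁻¹) ^ n * ‖x n‖⁻¹) * (((n : ℝ) * 2 ^ n) * ‖x n‖) = n := by
        field_simp [hxne n]
        rw [mul_right_comm, ← mul_pow]
        norm_num
      calc (n : ℝ) = (((2 : ℝ)⁻¹) ^ n * ‖x n‖⁻¹) * (((n : ℝ) * 2 ^ n) * ‖x n‖) := heq.symm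
        _ < (((2 : ℝ)⁻¹) ^ n * ‖x n‖⁻¹) * ‖T (x n)‖ := by
            apply mul_lt_mul_of_pos_left (hxT n)
            have : 0 < ‖x n‖ := lt_of_le_of_ne (norm_nonneg _) (Ne.symm (hxne n))
            positivity
    linarith
  obtain ⟨n, hn⟩ := exists_nat_gt ‖T s‖
  exact absurd (hlt n) (not_lt.mpr hn.le)

end Aux

/-- Let `X` be a Banach lattice and `S, T : X → X` linear operators such that
`|S x| ≤ T x` for every `x ≥ 0`. Then `S` and `T` are bounded and
`‖Sⁿ‖ ≤ ‖Tⁿ‖` for every natural number `n`. -/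
theorem bounded_and_norm_pow_le {X : Type*} [NormedAddCommGroup X] [Lattice X] [HasSolidNorm X]
    [IsOrderedAddMonoid X]
    [NormedSpace ℝ X] [CompleteSpace X]
    (S T : X →ₗ[ℝ] X)
    (h : ∀ x : X, 0 ≤ x → |S x| ≤ T x) :
    ∃ (S' T' : X →L[ℝ] X), (∀ x, S' x = S x) ∧ (∀ x, T' x = T x) ∧
      ∀ n : ℕ, ‖S' ^ n‖ ≤ ‖T' ^ n‖ := by
  have hTpos : ∀ x : X, 0 ≤ x → 0 ≤ T x := fun x hx => le_trans (abs_nonneg _) (h x hx)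
  obtain ⟨M, hM⟩ := positive_bounded T hTpos
  have habs_sub : ∀ a b : X, |a - b| ≤ |a| + |b| := by
    intro a b
    rw [sub_eq_add_neg]
    exact (abs_add_le a (-b)).trans (by rw [abs_neg])
  have hS_abs : ∀ x : X, |S x| ≤ T |x| := by
    intro x
    calc |S x| = |S x⁺ - S x⁻| := by rw [← map_sub, posPart_sub_negPart]
      _ ≤ |S x⁺| + |S x⁻| := habs_sub _ _
      _ ≤ T x⁺ + T x⁻ := add_le_add (h _ (posPart_nonneg x)) (h _ (negPart_nonneg x))
      _ = T |x| := by rw [← map_add, posPart_add_negPart]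
  have hT_abs : ∀ x : X, |T x| ≤ T |x| := by
    intro x
    calc |T x| = |T x⁺ - T x⁻| := by rw [← map_sub, posPart_sub_negPart]
      _ ≤ |T x⁺| + |T x⁻| := habs_sub _ _
      _ = T x⁺ + T x⁻ := by
          rw [abs_of_nonneg (hTpos _ (posPart_nonneg x)),
            abs_of_nonneg (hTpos _ (negPart_nonneg x))]
      _ = T |x| := by rw [← map_add, posPart_add_negPart]
  have hbound : ∀ (f : X →ₗ[ℝ] X), (∀ x, |f x| ≤ T |x|) → ∀ x, ‖f x‖ ≤ M * ‖x‖ := by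
    intro f hf x
    have h1 : ‖f x‖ ≤ ‖T |x|‖ := by
      apply norm_le_norm_of_abs_le_abs
      rw [abs_of_nonneg (hTpos _ (abs_nonneg x))]
      exact hf x
    calc ‖f x‖ ≤ ‖T |x|‖ := h1
      _ ≤ M * ‖|x|‖ := hM _ (abs_nonneg x)
      _ = M * ‖x‖ := by rw [norm_abs_eq_norm]
  set S' : X →L[ℝ] X := S.mkContinuous M (hbound S hS_abs) with hS'
  set T' : X →L[ℝ] X := T.mkContinuous M (hbound T hT_abs) with hT'
  have hS'app : ∀ x, S' x = S x := fun x => rfl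
  have hT'app : ∀ x, T' x = T x := fun x => rfl
  have hT'mono : ∀ a b : X, a ≤ b → T' a ≤ T' b := by
    intro a b hab
    have h0 := hTpos (b - a) (sub_nonneg.mpr hab)
    rw [map_sub] at h0
    rw [hT'app a, hT'app b]
    exact sub_nonneg.mp h0
  refine ⟨S', T', hS'app, hT'app, ?_⟩
  have hpow_pos : ∀ n : ℕ, ∀ y : X, 0 ≤ y → 0 ≤ (T' ^ n) y := by
    intro n
    induction n with
    | zero => intro y hy; simpa using hy
    | succ n ih =>
      intro y hy
      rw [pow_succ', ContinuousLinearMap.mul_apply]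
      have := ih y hy
      rw [show (T' ((T' ^ n) y) : X) = T ((T' ^ n) y) from rfl]
      exact hTpos _ this
  have habs : ∀ n : ℕ, ∀ x : X, |(S' ^ n) x| ≤ (T' ^ n) |x| := by
    intro n
    induction n with
    | zero => intro x; simp
    | succ n ih =>
      intro x
      rw [pow_succ', pow_succ', ContinuousLinearMap.mul_apply,
        ContinuousLinearMap.mul_apply]
      calc |S' ((S' ^ n) x)| = |S ((S' ^ n) x)| := by rw [hS'app]
        _ ≤ T |(S' ^ n) x| := hS_abs _
        _ = T' |(S' ^ n) x| := (hT'app _).symm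
        _ ≤ T' ((T' ^ n) |x|) := hT'mono _ _ (ih x)
  intro n
  refine ContinuousLinearMap.opNorm_le_bound _ (norm_nonneg _) fun x => ?_
  calc ‖(S' ^ n) x‖ ≤ ‖(T' ^ n) |x|‖ := by
        apply norm_le_norm_of_abs_le_abs
        rw [abs_of_nonneg (hpow_pos n |x| (abs_nonneg x))]
        exact habs n x
    _ ≤ ‖T' ^ n‖ * ‖|x|‖ := ContinuousLinearMap.le_opNorm _ _
    _ = ‖T' ^ n‖ * ‖x‖ := by rw [norm_abs_eq_norm]
end

section
/- Let f, g : [0,∞) → ℝ^N be nonnegative compactly supported continuous functions, T a positive linear operator on the space of compactly supported continuous ℝ^N-valued functions, and 1 < p < ∞ with conjugate exponent p'. Then T(f·g) ≤ (T f^p)^{1/p} · (T g^{p'})^{1/p'} pointwise and componentwise, where powers and products of ℝ^N-valued functions are taken componentwise. -/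
open Real

open Filter Topology

/-- Hölder-type inequality for a positive linear operator `T` on the space of
compactly supported continuous `ℝ^N`-valued functions: for nonnegative
compactly supported continuous `f, g` and conjugate exponents `p, p'`,
`T(f·g) ≤ (T f^p)^{1/p} · (T g^{p'})^{1/p'}` pointwise and componentwise
(powers and products taken componentwise). -/
theorem holder_type_positive_operator {N : ℕ}
    (T : (ℝ → (Fin N → ℝ)) →ₗ[ℝ] (ℝ → (Fin N → ℝ)))
    (hTpos : ∀ u : ℝ → (Fin N → ℝ), Continuous u → HasCompactSupport u →
      (∀ s, 0 ≤ u s) → ∀ s, 0 ≤ T u s)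
    (p p' : ℝ) (hp : 1 < p) (hpp' : 1 / p + 1 / p' = 1)
    (f g : ℝ → (Fin N → ℝ))
    (hfc : Continuous f) (hfs : HasCompactSupport f) (hf0 : ∀ s, 0 ≤ f s)
    (hgc : Continuous g) (hgs : HasCompactSupport g) (hg0 : ∀ s, 0 ≤ g s) :
    ∀ s : ℝ, 0 ≤ s → ∀ i : Fin N,
      T (fun x i => f x i * g x i) s i ≤
        (T (fun x i => f x i ^ p) s i) ^ (1 / p) *
          (T (fun x i => g x i ^ p') s i) ^ (1 / p') := by
  intro s hs i
  have hpq : p.HolderConjugate p' := by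
    have h1 : 1 / p < 1 := by rw [div_lt_one (by linarith)]; exact hp
    have h2 : 0 < 1 / p' := by linarith
    exact ⟨by simpa [one_div] using hpp', by linarith, one_div_pos.mp h2⟩
  have hp0 : 0 < p := hpq.pos
  have hp'0 : 0 < p' := hpq.symm.pos
  set u : ℝ → Fin N → ℝ := fun x j => f x j ^ p with hu
  set v : ℝ → Fin N → ℝ := fun x j => g x j ^ p' with hv
  set w : ℝ → Fin N → ℝ := fun x j => f x j * g x j with hw
  have huc : Continuous u :=
    continuous_pi fun j => ((continuous_apply j).comp hfc).rpow_const fun x => Or.inr hp0.le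
  have hvc : Continuous v :=
    continuous_pi fun j => ((continuous_apply j).comp hgc).rpow_const fun x => Or.inr hp'0.le
  have hwc : Continuous w :=
    continuous_pi fun j => ((continuous_apply j).comp hfc).mul ((continuous_apply j).comp hgc)
  have hus : HasCompactSupport u :=
    hfs.comp_left (g := fun (y : Fin N → ℝ) j => y j ^ p)
      (funext fun j => Real.zero_rpow hp0.ne')
  have hvs : HasCompactSupport v :=
    hgs.comp_left (g := fun (y : Fin N → ℝ) j => y j ^ p')
      (funext fun j => Real.zero_rpow hp'0.ne')
  have hws : HasCompactSupport w := by
    apply hfs.mono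
    intro x hx
    simp only [Function.mem_support, ne_eq] at hx ⊢
    intro hfx
    exact hx (funext fun j => by simp [hw, show f x = 0 from hfx])
  have hu0 : ∀ x, 0 ≤ u x := fun x j => Real.rpow_nonneg (hf0 x j) p
  have hv0 : ∀ x, 0 ≤ v x := fun x j => Real.rpow_nonneg (hg0 x j) p'
  have hw0 : ∀ x, 0 ≤ w x := fun x j => mul_nonneg (hf0 x j) (hg0 x j)
  set A := T u s i with hA
  set B := T v s i with hB
  have hA0 : 0 ≤ A := hTpos u huc hus hu0 s i
  have hB0 : 0 ≤ B := hTpos v hvc hvs hv0 s i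
  have key : ∀ ε : ℝ, 0 < ε → T w s i ≤ (A + ε) ^ (1/p) * (B + ε) ^ (1/p') := by
    intro ε hε
    set A' := A + ε with hA'
    set B' := B + ε with hB'
    have hA'p : 0 < A' := by positivity
    have hB'p : 0 < B' := by positivity
    set K := A' ^ (1/p) * B' ^ (1/p') with hK
    have hKp : 0 < K := mul_pos (Real.rpow_pos_of_pos hA'p _) (Real.rpow_pos_of_pos hB'p _)
    set c1 := K / (p * A') with hc1
    set c2 := K / (p' * B') with hc2
    have hc1p : 0 < c1 := by positivity
    have hc2p : 0 < c2 := by positivity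
    set φ : ℝ → Fin N → ℝ := c1 • u + c2 • v - w with hφ
    have hφ0 : ∀ x, 0 ≤ φ x := by
      intro x j
      have hy := Real.young_inequality_of_nonneg
        (a := f x j / A' ^ (1/p)) (b := g x j / B' ^ (1/p'))
        (div_nonneg (hf0 x j) (Real.rpow_nonneg hA'p.le _))
        (div_nonneg (hg0 x j) (Real.rpow_nonneg hB'p.le _)) hpq
      have h1 : (f x j / A' ^ (1/p)) ^ p = f x j ^ p / A' := by
        rw [Real.div_rpow (hf0 x j) (Real.rpow_nonneg hA'p.le _),
          ← Real.rpow_mul hA'p.le, one_div_mul_cancel hp0.ne', Real.rpow_one]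
      have h2 : (g x j / B' ^ (1/p')) ^ p' = g x j ^ p' / B' := by
        rw [Real.div_rpow (hg0 x j) (Real.rpow_nonneg hB'p.le _),
          ← Real.rpow_mul hB'p.le, one_div_mul_cancel hp'0.ne', Real.rpow_one]
      rw [h1, h2, div_mul_div_comm, ← hK, div_le_iff₀ hKp] at hy
      have hgoal : φ x j = c1 * f x j ^ p + c2 * g x j ^ p' - f x j * g x j := by
        simp [hφ, hu, hv, hw]
      rw [Pi.zero_apply, hgoal]
      have heq : (f x j ^ p / A' / p + g x j ^ p' / B' / p') * K
          = c1 * f x j ^ p + c2 * g x j ^ p' := by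
        rw [hc1, hc2]
        field_simp
      rw [heq] at hy
      linarith
    have hφc : Continuous φ := ((huc.const_smul c1).add (hvc.const_smul c2)).sub hwc
    have hwns : HasCompactSupport (-w) := hws.comp_left (g := Neg.neg) neg_zero
    have hφs : HasCompactSupport φ := by
      rw [hφ, sub_eq_add_neg]
      exact ((hus.smul_left (f := fun _ => c1)).add (hvs.smul_left (f := fun _ => c2))).add hwns
    have h0 := hTpos φ hφc hφs hφ0 s i
    have hTφ : T φ = c1 • T u + c2 • T v - T w := by
      rw [hφ, map_sub, map_add, map_smul, map_smul]
    rw [hTφ] at h0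
    simp only [Pi.sub_apply, Pi.add_apply, Pi.smul_apply, smul_eq_mul, Pi.zero_apply] at h0
    have hstep : T w s i ≤ c1 * A' + c2 * B' := by
      have h1 : A ≤ A' := by linarith
      have h2 : B ≤ B' := by linarith
      nlinarith [mul_le_mul_of_nonneg_left h1 hc1p.le, mul_le_mul_of_nonneg_left h2 hc2p.le]
    have hfin : c1 * A' + c2 * B' = K := by
      have : c1 * A' + c2 * B' = K * (1/p) + K * (1/p') := by
        rw [hc1, hc2]; field_simp
      rw [this, ← mul_add, hpp', mul_one]
    linarith
  have h1 : ContinuousAt (fun ε : ℝ => (A + ε) ^ (1/p)) 0 :=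
    ContinuousAt.rpow_const ((continuous_const.add continuous_id).continuousAt) (Or.inr (by positivity))
  have h2 : ContinuousAt (fun ε : ℝ => (B + ε) ^ (1/p')) 0 :=
    ContinuousAt.rpow_const ((continuous_const.add continuous_id).continuousAt) (Or.inr (by positivity))
  have hlim : Tendsto (fun ε : ℝ => (A + ε) ^ (1/p) * (B + ε) ^ (1/p')) (𝓝[>] 0)
      (𝓝 (A ^ (1/p) * B ^ (1/p'))) := by
    have := (h1.mul h2).tendsto.mono_left (nhdsWithin_le_nhds (s := Set.Ioi (0:ℝ)))
    simpa [Pi.mul_def] using this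
  exact ge_of_tendsto hlim (eventually_mem_nhdsWithin.mono fun ε hε => key ε hε)
end

section
/- Let A generate a positive C₀-semigroup (T(t)) with negative growth bound on a Banach lattice X, U an AL-space, and C : D(A) → U a positive linear operator. Then C is 1-admissible for every t > 0; more precisely, ∫₀ᵗ ‖C T(s) x‖_U ds ≤ ‖C A^{−1}‖_{L(X,U)} ‖x‖_X for all x ∈ D(A) and all t > 0. -/
open Filter Topology Set MeasureTheory

/-- A strongly continuous one-parameter semigroup of bounded operators. -/
structure C0Semigroup (X : Type*) [NormedAddCommGroup X] [NormedSpace ℝ X] where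
  toFun : ℝ → X →L[ℝ] X
  map_zero' : toFun 0 = ContinuousLinearMap.id ℝ X
  map_add' : ∀ s t : ℝ, 0 ≤ s → 0 ≤ t → toFun (s + t) = (toFun s).comp (toFun t)
  strongCont' : ∀ x : X, ContinuousOn (fun t => toFun t x) (Set.Ici 0)

/-- `A` (an unbounded operator given as a partial linear map) is the generator
of the `C₀`-semigroup `T`. -/
def C0Semigroup.IsGenerator {X : Type*} [NormedAddCommGroup X] [NormedSpace ℝ X]
    (T : C0Semigroup X) (A : X →ₗ.[ℝ] X) : Prop :=
  (∀ x : X, x ∈ A.domain ↔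
      ∃ y : X, Tendsto (fun t : ℝ => t⁻¹ • (T.toFun t x - x)) (𝓝[>] 0) (𝓝 y)) ∧
  (∀ x : A.domain,
      Tendsto (fun t : ℝ => t⁻¹ • (T.toFun t (x : X) - (x : X))) (𝓝[>] 0) (𝓝 (A x)))

/-- `R` is the resolvent `R(l, A)` of the partial linear operator `A`. -/
def IsResolventAt {X : Type*} [NormedAddCommGroup X] [NormedSpace ℝ X]
    (A : X →ₗ.[ℝ] X) (l : ℝ) (R : X →L[ℝ] X) : Prop :=
  (∀ x : X, ∃ h : R x ∈ A.domain, l • R x - A ⟨R x, h⟩ = x) ∧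
  (∀ x : A.domain, R (l • (x : X) - A x) = x)

/-- The semigroup has negative growth bound. -/
def C0Semigroup.NegGrowthBound {X : Type*} [NormedAddCommGroup X] [NormedSpace ℝ X]
    (T : C0Semigroup X) : Prop :=
  ∃ ε > (0:ℝ), ∃ M : ℝ, ∀ t : ℝ, 0 ≤ t → ‖T.toFun t‖ ≤ M * Real.exp (-ε * t)

/-- `U` is an AL-space. -/
def IsALSpace (U : Type*) [NormedAddCommGroup U] [Lattice U] [HasSolidNorm U] [IsOrderedAddMonoid U] : Prop :=
  ∀ x y : U, 0 ≤ x → 0 ≤ y → ‖x + y‖ = ‖x‖ + ‖y‖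



section Pos
variable {E : Type*} [NormedAddCommGroup E] [Lattice E] [HasSolidNorm E] [IsOrderedAddMonoid E] [NormedSpace ℝ E]

lemma real_smul_nonneg_s12 {c : ℝ} (hc : 0 ≤ c) {v : E} (hv : 0 ≤ v) : 0 ≤ c • v := by
  have hdy : ∀ (k m : ℕ), 0 ≤ ((m : ℝ) / 2 ^ k) • v := by
    intro k
    induction k with
    | zero =>
      intro m
      simpa [Nat.cast_smul_eq_nsmul] using nsmul_nonneg hv m
    | succ k ih =>
      intro m
      have h2 : (0:E) ≤ 2 • (((m : ℝ) / 2 ^ (k+1)) • v) := by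
        have he : (2:ℕ) • (((m : ℝ) / 2 ^ (k+1)) • v) = ((m : ℝ) / 2 ^ k) • v := by
          rw [Nat.cast_smul_eq_nsmul (R := ℝ) 2 _ |>.symm, smul_smul]
          congr 1
          push_cast
          ring
        rw [he]
        exact ih m
      exact nsmul_two_semiclosed h2
  -- approximate c by dyadics from above
  have htend : Tendsto (fun n : ℕ => ((⌈c * 2 ^ n⌉₊ : ℝ) / 2 ^ n) • v) atTop (𝓝 (c • v)) := by
    have h1 : Tendsto (fun n : ℕ => ((⌈c * 2 ^ n⌉₊ : ℝ) / 2 ^ n)) atTop (𝓝 c) := by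
      rw [tendsto_iff_dist_tendsto_zero]
      apply squeeze_zero (fun n => dist_nonneg) (g := fun n : ℕ => (2 ^ n : ℝ)⁻¹)
      · intro n
        have hpow : (0:ℝ) < 2 ^ n := by positivity
        have hle : c * 2 ^ n ≤ (⌈c * 2 ^ n⌉₊ : ℝ) := Nat.le_ceil _
        have hlt : (⌈c * 2 ^ n⌉₊ : ℝ) < c * 2 ^ n + 1 :=
          Nat.ceil_lt_add_one (by positivity)
        rw [Real.dist_eq, abs_of_nonneg (by rw [sub_nonneg, le_div_iff₀ hpow]; linarith),
          sub_le_iff_le_add, div_le_iff₀ hpow]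
        have : ((2:ℝ) ^ n)⁻¹ * 2 ^ n = 1 := inv_mul_cancel₀ hpow.ne'
        nlinarith
      · exact tendsto_inv_atTop_zero.comp (tendsto_pow_atTop_atTop_of_one_lt one_lt_two)
    exact h1.smul_const v
  exact isClosed_nonneg.mem_of_tendsto htend
    (Filter.Eventually.of_forall fun n => hdy n _)

lemma convex_nonneg_cone : Convex ℝ {x : E | 0 ≤ x} := fun x hx y hy a b ha hb _ =>
  add_nonneg (real_smul_nonneg_s12 ha hx) (real_smul_nonneg_s12 hb hy)

end Pos

section IntNonneg
variable {E : Type*} [NormedAddCommGroup E] [Lattice E] [HasSolidNorm E] [IsOrderedAddMonoid E] [NormedSpace ℝ E] [CompleteSpace E]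

lemma intervalIntegral_nonneg_vec {f : ℝ → E} {a b : ℝ} (hab : a < b)
    (hf : IntervalIntegrable f volume a b)
    (h0 : ∀ x ∈ Set.Ioc a b, 0 ≤ f x) : 0 ≤ ∫ x in a..b, f x := by
  rw [intervalIntegral.integral_of_le hab.le]
  set μ := volume.restrict (Ioc a b) with hμ
  have hne : NeZero μ := by
    constructor
    simp only [hμ, ← pos_iff_ne_zero]
    intro h
    rw [Measure.restrict_eq_zero] at h
    simp [Real.volume_Ioc] at h
    linarith
  have hint : Integrable f μ :=
    (intervalIntegrable_iff_integrableOn_Ioc_of_le hab.le).mp hf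
  have havg : ⨍ x, f x ∂μ ∈ {x : E | 0 ≤ x} :=
    Convex.average_mem convex_nonneg_cone isClosed_nonneg
      ((ae_restrict_mem measurableSet_Ioc).mono h0) hint
  rw [average_eq] at havg
  have hvol : μ.real univ = b - a := by
    simp [measureReal_def, hμ, Real.volume_Ioc, ENNReal.toReal_ofReal (by linarith : (0:ℝ) ≤ b - a)]
  rw [hvol] at havg
  have := real_smul_nonneg_s12 (c := b - a) (by linarith) havg
  rwa [smul_smul, mul_inv_cancel₀ (by linarith : b - a ≠ 0), one_smul] at this

end IntNonneg

section ALfun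
variable {U : Type*} [NormedAddCommGroup U] [Lattice U] [HasSolidNorm U] [IsOrderedAddMonoid U] [NormedSpace ℝ U]

lemma al_key_identity (u v : U) : (u+v)⁺ + u⁻ + v⁻ = (u+v)⁻ + u⁺ + v⁺ := by
  have h : ((u+v)⁺ + u⁻ + v⁻) - ((u+v)⁻ + u⁺ + v⁺)
      = ((u+v)⁺ - (u+v)⁻) - ((u⁺ - u⁻) + (v⁺ - v⁻)) := by abel
  rw [posPart_sub_negPart, posPart_sub_negPart, posPart_sub_negPart] at h
  simp only [sub_self] at h
  exact sub_eq_zero.mp h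

lemma exists_AL_functional (hUal : IsALSpace U) :
    ∃ F : U →L[ℝ] ℝ, ∀ u : U, 0 ≤ u → F u = ‖u‖ := by
  have hadd : ∀ u v : U, (‖(u+v)⁺‖ - ‖(u+v)⁻‖) = (‖u⁺‖ - ‖u⁻‖) + (‖v⁺‖ - ‖v⁻‖) := by
    intro u v
    have h3 : ∀ a b c : U, 0 ≤ a → 0 ≤ b → 0 ≤ c → ‖a + b + c‖ = ‖a‖ + ‖b‖ + ‖c‖ := by
      intro a b c ha hb hc
      rw [hUal _ _ (add_nonneg ha hb) hc, hUal _ _ ha hb]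
    have h := congrArg norm (al_key_identity u v)
    rw [h3 _ _ _ (posPart_nonneg _) (negPart_nonneg _) (negPart_nonneg _),
        h3 _ _ _ (negPart_nonneg _) (posPart_nonneg _) (posPart_nonneg _)] at h
    linarith
  set g : U → ℝ := fun u => ‖u⁺‖ - ‖u⁻‖ with hg
  have hmk : ∀ u v : U, g (u + v) = g u + g v := hadd
  set G : U →+ ℝ := AddMonoidHom.mk' g hmk with hG
  have hbound : ∀ u : U, |G u| ≤ ‖u‖ := by
    intro u
    have h1 : ‖u⁺ + u⁻‖ = ‖u⁺‖ + ‖u⁻‖ := hUal _ _ (posPart_nonneg _) (negPart_nonneg _)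
    rw [posPart_add_negPart, norm_abs_eq_norm] at h1
    have := norm_nonneg u⁺
    have := norm_nonneg u⁻
    simp only [hG, AddMonoidHom.mk'_apply, hg]
    rw [abs_le]
    constructor <;> linarith
  have hcont : Continuous G := by
    apply AddMonoidHomClass.continuous_of_bound G 1
    intro u
    rw [one_mul, Real.norm_eq_abs]
    exact hbound u
  refine ⟨G.toRealLinearMap hcont, fun u hu => ?_⟩
  simp only [AddMonoidHom.coe_toRealLinearMap, hG, AddMonoidHom.mk'_apply, hg]
  rw [posPart_eq_self.mpr hu, negPart_eq_zero.mpr hu, norm_zero, sub_zero]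

end ALfun

section Semigroup
variable {X : Type*} [NormedAddCommGroup X] [NormedSpace ℝ X] [CompleteSpace X]
variable (Tsg : C0Semigroup X)

lemma C0Semigroup.apply_add {s r : ℝ} (hs : 0 ≤ s) (hr : 0 ≤ r) (x : X) :
    Tsg.toFun (s + r) x = Tsg.toFun s (Tsg.toFun r x) := by
  rw [Tsg.map_add' s r hs hr]; rfl

lemma C0Semigroup.apply_zero (x : X) : Tsg.toFun 0 x = x := by
  rw [Tsg.map_zero']; rfl

lemma C0Semigroup.intInt {a b : ℝ} (ha : 0 ≤ a) (hb : 0 ≤ b) (z : X) :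
    IntervalIntegrable (fun r => Tsg.toFun r z) volume a b := by
  apply ContinuousOn.intervalIntegrable
  exact (Tsg.strongCont' z).mono fun x hx => le_trans (le_min ha hb) hx.1

lemma C0Semigroup.tendsto_avg (z : X) {c : ℝ} (hc : 0 ≤ c) :
    Tendsto (fun s : ℝ => s⁻¹ • ∫ u in c..(c+s), Tsg.toFun u z) (𝓝[>] 0)
      (𝓝 (Tsg.toFun c z)) := by
  rw [Metric.tendsto_nhdsWithin_nhds]
  intro ε hε
  have hcw : ContinuousWithinAt (fun u => Tsg.toFun u z) (Ici 0) c :=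
    (Tsg.strongCont' z) c (mem_Ici.mpr hc)
  rw [Metric.continuousWithinAt_iff] at hcw
  obtain ⟨δ, hδ, hball⟩ := hcw (ε/2) (by linarith)
  refine ⟨δ, hδ, ?_⟩
  intro s hs hsd
  have hs0 : (0:ℝ) < s := hs
  have hsd' : s < δ := by rwa [Real.dist_eq, sub_zero, abs_of_pos hs0] at hsd
  have hfi : IntervalIntegrable (fun u => Tsg.toFun u z) volume c (c+s) :=
    Tsg.intInt hc (by linarith) z
  have hci : IntervalIntegrable (fun _ : ℝ => Tsg.toFun c z) volume c (c+s) :=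
    intervalIntegrable_const
  have hsub : (∫ u in c..(c+s), (Tsg.toFun u z - Tsg.toFun c z))
      = (∫ u in c..(c+s), Tsg.toFun u z) - s • Tsg.toFun c z := by
    rw [intervalIntegral.integral_sub hfi hci, intervalIntegral.integral_const]
    simp
  have hnorm : ‖∫ u in c..(c+s), (Tsg.toFun u z - Tsg.toFun c z)‖ ≤ ε/2 * |c + s - c| := by
    apply intervalIntegral.norm_integral_le_of_norm_le_const
    intro u hu
    rw [uIoc_of_le (by linarith : c ≤ c + s)] at hu
    have h1 : u ∈ Ici (0:ℝ) := mem_Ici.mpr (by have := hu.1; linarith)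
    have h2 : dist u c < δ := by
      rw [Real.dist_eq, abs_of_nonneg (by have := hu.1; linarith : (0:ℝ) ≤ u - c)]
      have := hu.2; linarith
    have := hball h1 h2
    rw [dist_eq_norm] at this
    exact this.le
  rw [dist_eq_norm]
  have heq : s⁻¹ • (∫ u in c..(c+s), Tsg.toFun u z) - Tsg.toFun c z
      = s⁻¹ • (∫ u in c..(c+s), (Tsg.toFun u z - Tsg.toFun c z)) := by
    rw [hsub, smul_sub, smul_smul, inv_mul_cancel₀ hs0.ne', one_smul]
  rw [heq, norm_smul, norm_inv, Real.norm_eq_abs, abs_of_pos hs0]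
  calc s⁻¹ * ‖∫ u in c..(c+s), (Tsg.toFun u z - Tsg.toFun c z)‖
      ≤ s⁻¹ * (ε/2 * |c + s - c|) := by
        apply mul_le_mul_of_nonneg_left hnorm (by positivity)
    _ = ε / 2 := by
        rw [show c + s - c = s by ring, abs_of_pos hs0]
        field_simp
    _ < ε := by linarith

lemma C0Semigroup.integral_mem_domain (A : X →ₗ.[ℝ] X) (hA : Tsg.IsGenerator A)
    {h : ℝ} (hh : 0 < h) (z : X) :
    ∃ hm : (∫ r in (0:ℝ)..h, Tsg.toFun r z) ∈ A.domain,
      A ⟨∫ r in (0:ℝ)..h, Tsg.toFun r z, hm⟩ = Tsg.toFun h z - z := by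
  set w := ∫ r in (0:ℝ)..h, Tsg.toFun r z with hw
  have key : Tendsto (fun s : ℝ => s⁻¹ • (Tsg.toFun s w - w)) (𝓝[>] 0)
      (𝓝 (Tsg.toFun h z - z)) := by
    have hlim : Tendsto (fun s : ℝ =>
        s⁻¹ • (∫ u in h..(h+s), Tsg.toFun u z) - s⁻¹ • (∫ u in (0:ℝ)..(0+s), Tsg.toFun u z))
        (𝓝[>] 0) (𝓝 (Tsg.toFun h z - z)) := by
      have h2 := (Tsg.tendsto_avg z hh.le).sub (Tsg.tendsto_avg z (le_refl (0:ℝ)))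
      rw [Tsg.apply_zero z] at h2
      simpa [smul_sub] using h2
    apply hlim.congr'
    filter_upwards [self_mem_nhdsWithin] with s hs
    have hs0 : (0:ℝ) < s := hs
    have h1 : Tsg.toFun s w = ∫ u in s..(s+h), Tsg.toFun u z := by
      rw [hw, ← ContinuousLinearMap.intervalIntegral_comp_comm _ (Tsg.intInt le_rfl hh.le z)]
      rw [intervalIntegral.integral_congr (g := fun r => Tsg.toFun (s + r) z) ?_]
      · rw [intervalIntegral.integral_comp_add_left (fun u => Tsg.toFun u z) s]
        norm_num
      · intro r hr
        rw [uIcc_of_le hh.le] at hr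
        exact (Tsg.apply_add hs0.le hr.1 z).symm
    have i1 : IntervalIntegrable (fun u => Tsg.toFun u z) volume 0 s := Tsg.intInt le_rfl hs0.le z
    have i2 : IntervalIntegrable (fun u => Tsg.toFun u z) volume s h := Tsg.intInt hs0.le hh.le z
    have i3 : IntervalIntegrable (fun u => Tsg.toFun u z) volume h (s+h) :=
      Tsg.intInt hh.le (by linarith) z
    have c1 := intervalIntegral.integral_add_adjacent_intervals i2 i3
    have c2 := intervalIntegral.integral_add_adjacent_intervals i1 i2
    have hdiff : Tsg.toFun s w - w
        = (∫ u in h..(h+s), Tsg.toFun u z) - (∫ u in (0:ℝ)..(0+s), Tsg.toFun u z) := by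
      rw [h1, hw]
      rw [show h + s = s + h by ring, show (0:ℝ) + s = s by ring]
      rw [← c1, ← c2]
      abel
    rw [← smul_sub, hdiff]
  have hmem : w ∈ A.domain := (hA.1 w).mpr ⟨_, key⟩
  exact ⟨hmem, tendsto_nhds_unique (hA.2 ⟨w, hmem⟩) key⟩

end Semigroup

section Semigroup2
variable {X : Type*} [NormedAddCommGroup X] [NormedSpace ℝ X] [CompleteSpace X]
variable (Tsg : C0Semigroup X) (A : X →ₗ.[ℝ] X)

lemma C0Semigroup.gen_comm_tendsto (hA : Tsg.IsGenerator A) {s : ℝ} (hs : 0 ≤ s) (z : A.domain) :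
    Tendsto (fun r : ℝ => r⁻¹ • (Tsg.toFun r (Tsg.toFun s (z : X)) - Tsg.toFun s (z : X)))
      (𝓝[>] 0) (𝓝 (Tsg.toFun s (A z))) := by
  have hlim : Tendsto (fun r : ℝ => Tsg.toFun s (r⁻¹ • (Tsg.toFun r (z : X) - (z : X))))
      (𝓝[>] 0) (𝓝 (Tsg.toFun s (A z))) :=
    ((Tsg.toFun s).continuous.tendsto _).comp (hA.2 z)
  apply hlim.congr'
  filter_upwards [self_mem_nhdsWithin] with r hr
  have hr0 : (0:ℝ) < r := hr
  rw [_root_.map_smul, map_sub]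
  congr 2
  rw [← Tsg.apply_add hs hr0.le, ← Tsg.apply_add hr0.le hs, add_comm]

lemma C0Semigroup.gen_comm (hA : Tsg.IsGenerator A)
    (hinv : ∀ s : ℝ, 0 ≤ s → ∀ y : X, y ∈ A.domain → Tsg.toFun s y ∈ A.domain)
    {s : ℝ} (hs : 0 ≤ s) (z : A.domain) :
    A ⟨Tsg.toFun s (z : X), hinv s hs (z : X) z.2⟩ = Tsg.toFun s (A z) :=
  tendsto_nhds_unique (hA.2 ⟨Tsg.toFun s (z : X), hinv s hs (z : X) z.2⟩)
    (Tsg.gen_comm_tendsto A hA hs z)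

lemma C0Semigroup.ftc (hA : Tsg.IsGenerator A) {t : ℝ} (ht : 0 ≤ t) (z : A.domain) :
    ∫ s in (0:ℝ)..t, Tsg.toFun s (A z) = Tsg.toFun t (z : X) - (z : X) := by
  have hcont : ContinuousOn (fun s => Tsg.toFun s (z : X)) (Icc 0 t) :=
    (Tsg.strongCont' (z : X)).mono (Icc_subset_Ici_self)
  have hderiv : ∀ s ∈ Ioo (0:ℝ) t,
      HasDerivWithinAt (fun s => Tsg.toFun s (z : X)) (Tsg.toFun s (A z)) (Ioi s) s := by
    intro s hs
    rw [hasDerivWithinAt_iff_tendsto_slope]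
    have hsub : Ioi s \ {s} = Ioi s := by
      ext y; simp only [mem_diff, mem_Ioi, mem_singleton_iff]
      exact ⟨fun h => h.1, fun h => ⟨h, ne_of_gt h⟩⟩
    rw [hsub]
    have htr : Tendsto (fun y : ℝ => y - s) (𝓝[>] s) (𝓝[>] 0) := by
      rw [tendsto_nhdsWithin_iff]
      constructor
      · have : Tendsto (fun y : ℝ => y - s) (𝓝 s) (𝓝 (s - s)) :=
          (continuous_id.sub continuous_const).tendsto s
        rw [sub_self] at this
        exact this.mono_left nhdsWithin_le_nhds
      · filter_upwards [self_mem_nhdsWithin] with y hy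
        exact sub_pos.mpr (mem_Ioi.mp hy)
    have hmain := (Tsg.gen_comm_tendsto A hA hs.1.le z).comp htr
    apply hmain.congr'
    filter_upwards [self_mem_nhdsWithin] with y hy
    have hys : s < y := hy
    simp only [Function.comp_apply, slope_def_module]
    rw [show Tsg.toFun y (z:X) = Tsg.toFun (y - s) (Tsg.toFun s (z:X)) by
      rw [← Tsg.apply_add (by linarith : (0:ℝ) ≤ y - s) hs.1.le]; norm_num]
  have hint : IntervalIntegrable (fun s => Tsg.toFun s (A z)) volume 0 t :=
    Tsg.intInt le_rfl ht (A z)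
  rw [intervalIntegral.integral_eq_sub_of_hasDeriv_right_of_le ht hcont hderiv hint,
    Tsg.apply_zero]

end Semigroup2


/-- Let `A` generate a positive `C₀`-semigroup `(T(t))` with negative growth
bound on a Banach lattice `X`, `U` an AL-space, and `C : D(A) → U` a positive
linear operator.  Then `C` is `1`-admissible for every `t > 0`; more
precisely `∫₀ᵗ ‖C T(s) x‖_U ds ≤ ‖C A⁻¹‖_{L(X,U)} ‖x‖_X` for all
`x ∈ D(A)` and `t > 0`.  Here `K = C A⁻¹ = −C R(0,A)`. -/
theorem one_admissibility_AL
    {X U : Type*}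
    [NormedAddCommGroup X] [Lattice X] [HasSolidNorm X] [IsOrderedAddMonoid X] [NormedSpace ℝ X] [CompleteSpace X]
    [NormedAddCommGroup U] [Lattice U] [HasSolidNorm U] [IsOrderedAddMonoid U] [NormedSpace ℝ U] [CompleteSpace U]
    (Tsg : C0Semigroup X)
    (hTpos : ∀ s : ℝ, 0 ≤ s → ∀ x : X, 0 ≤ x → 0 ≤ Tsg.toFun s x)
    (hω : Tsg.NegGrowthBound)
    (A : X →ₗ.[ℝ] X) (hA : Tsg.IsGenerator A)
    (hUal : IsALSpace U)
    (C : A.domain →ₗ[ℝ] U)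
    (hCpos : ∀ x : A.domain, 0 ≤ (x : X) → 0 ≤ C x)
    -- the semigroup leaves the domain invariant
    (hinv : ∀ s : ℝ, 0 ≤ s → ∀ y : X, y ∈ A.domain → Tsg.toFun s y ∈ A.domain)
    -- `R0 = R(0,A)` and `K = C A⁻¹ = −C ∘ R0 : X → U` bounded
    (R0 : X →L[ℝ] X) (hR0 : IsResolventAt A 0 R0)
    (hR0dom : ∀ x : X, R0 x ∈ A.domain)
    (K : X →L[ℝ] U) (hK : ∀ x : X, K x = -C ⟨R0 x, hR0dom x⟩) :
    ∀ t : ℝ, 0 < t → ∀ x : A.domain,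
      (∫ s in Icc (0:ℝ) t,
        if h : (0:ℝ) ≤ s then ‖C ⟨Tsg.toFun s (x : X), hinv s h (x : X) x.2⟩‖ else 0)
        ≤ ‖K‖ * ‖(x : X)‖ := by
  intro t ht x
  classical
  obtain ⟨F, hF⟩ := exists_AL_functional hUal
  set T := Tsg.toFun with hTdef
  have Fpos : ∀ u : U, 0 ≤ u → 0 ≤ F u := fun u hu => by rw [hF u hu]; positivity
  have Fmono : ∀ u v : U, u ≤ v → F u ≤ F v := by
    intro u v huv
    have h1 := Fpos (v - u) (sub_nonneg.mpr huv)
    rw [map_sub] at h1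
    linarith
  -- uniform bound on the semigroup
  obtain ⟨ε, hε, M, hM⟩ := hω
  set M' : ℝ := max M 1 with hM'def
  have hMpos : (0:ℝ) < M' := lt_of_lt_of_le one_pos (le_max_right _ _)
  have hbnd : ∀ s : ℝ, 0 ≤ s → ∀ v : X, ‖T s v‖ ≤ M' * ‖v‖ := by
    intro s hs v
    calc ‖T s v‖ ≤ ‖T s‖ * ‖v‖ := (T s).le_opNorm v
      _ ≤ M' * ‖v‖ := by
          apply mul_le_mul_of_nonneg_right _ (norm_nonneg v)
          refine (hM s hs).trans ?_
          have h1 : Real.exp (-ε * s) ≤ 1 := Real.exp_le_one_iff.mpr (by nlinarith)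
          have h0 : 0 < Real.exp (-ε * s) := Real.exp_pos _
          rcases le_or_gt M 0 with h | h
          · nlinarith [le_max_right M 1]
          · nlinarith [le_max_left M 1]
  -- decay of the semigroup along integer times
  have hdecay : ∀ v : X, Tendsto (fun n : ℕ => T ((n:ℝ)+1) v) atTop (𝓝 0) := by
    intro v
    have hexp : Tendsto (fun n : ℕ => (|M| * ‖v‖) * Real.exp (-ε * ((n:ℝ)+1))) atTop (𝓝 0) := by
      have h1 : Tendsto (fun y : ℝ => Real.exp (-ε * y)) atTop (𝓝 0) := by
        have h2 : Tendsto (fun y : ℝ => -(ε * y)) atTop atBot :=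
          tendsto_neg_atTop_atBot.comp (tendsto_id.const_mul_atTop hε)
        have := Real.tendsto_exp_atBot.comp h2
        simpa [Function.comp_def, neg_mul] using this
      have h3 : Tendsto (fun n : ℕ => ((n:ℝ)+1)) atTop atTop :=
        tendsto_atTop_add_const_right _ 1 tendsto_natCast_atTop_atTop
      simpa using ((h1.comp h3).const_mul (|M| * ‖v‖))
    apply squeeze_zero_norm _ hexp
    intro n
    have h0 : 0 < Real.exp (-ε * ((n:ℝ)+1)) := Real.exp_pos _
    calc ‖T ((n:ℝ)+1) v‖ ≤ ‖T ((n:ℝ)+1)‖ * ‖v‖ := (T _).le_opNorm v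
      _ ≤ (M * Real.exp (-ε * ((n:ℝ)+1))) * ‖v‖ :=
          mul_le_mul_of_nonneg_right (hM ((n:ℝ)+1) (by positivity)) (norm_nonneg v)
      _ ≤ (|M| * ‖v‖) * Real.exp (-ε * ((n:ℝ)+1)) := by
          nlinarith [mul_le_mul_of_nonneg_right (le_abs_self M)
            (mul_nonneg (Real.exp_pos (-ε * ((n:ℝ)+1))).le (norm_nonneg v))]
  -- A on R0
  have hR0A : ∀ v : X, A ⟨R0 v, hR0dom v⟩ = -v := by
    intro v
    obtain ⟨hdom, heq⟩ := hR0.1 v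
    rw [zero_smul, zero_sub] at heq
    have heq' : -(A ⟨R0 v, hR0dom v⟩) = v := heq
    have h3 := congrArg Neg.neg heq'
    rwa [neg_neg] at h3
  -- positivity of the resolvent
  have hR0pos : ∀ v : X, 0 ≤ v → 0 ≤ R0 v := by
    intro v hv
    have hz : ∀ n : ℕ, R0 v - T ((n:ℝ)+1) (R0 v) = ∫ s in (0:ℝ)..((n:ℝ)+1), T s v := by
      intro n
      have hftc := Tsg.ftc A hA (by positivity : (0:ℝ) ≤ (n:ℝ)+1) ⟨R0 v, hR0dom v⟩
      rw [hR0A v] at hftc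
      have hneg : (∫ s in (0:ℝ)..((n:ℝ)+1), T s (-v)) = - ∫ s in (0:ℝ)..((n:ℝ)+1), T s v := by
        rw [← intervalIntegral.integral_neg]
        congr 1
        funext s
        rw [map_neg]
      rw [hneg] at hftc
      have := congrArg Neg.neg hftc
      rw [neg_neg] at this
      rw [this]
      abel
    have hpos : ∀ n : ℕ, 0 ≤ R0 v - T ((n:ℝ)+1) (R0 v) := by
      intro n
      rw [hz n]
      apply intervalIntegral_nonneg_vec (by positivity) (Tsg.intInt le_rfl (by positivity) v)
      intro s hs
      exact hTpos s hs.1.le v hv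
    have hlim : Tendsto (fun n : ℕ => R0 v - T ((n:ℝ)+1) (R0 v)) atTop (𝓝 (R0 v)) := by
      simpa using tendsto_const_nhds.sub (hdecay (R0 v))
    exact isClosed_nonneg.mem_of_tendsto hlim (Filter.Eventually.of_forall hpos)
  -- C in terms of K
  have hCK : ∀ z : A.domain, C z = K (A z) := by
    intro z
    have h1 : R0 (A z) = -(z : X) := by
      have h2 := hR0.2 z
      rw [zero_smul, zero_sub, map_neg] at h2
      rw [← h2, neg_neg]
    have h2 : (⟨R0 (A z), hR0dom (A z)⟩ : A.domain) = -z := Subtype.ext h1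
    rw [hK (A z), h2, map_neg, neg_neg]
  have hKneg : ∀ v : X, 0 ≤ v → K v ≤ 0 := by
    intro v hv
    rw [hK v]
    exact neg_nonpos.mpr (hCpos _ (hR0pos v hv))
  -- the subset fact
  have hsub : uIcc (0:ℝ) t ⊆ Ici 0 := by
    rw [uIcc_of_le ht.le]; exact Icc_subset_Ici_self
  -- continuity helpers
  have hcontKT : ∀ v : X, ContinuousOn (fun s => K (T s v)) (Ici 0) := fun v =>
    K.continuous.comp_continuousOn (Tsg.strongCont' v)
  have hii : ∀ (v : X) (a b : ℝ), 0 ≤ a → 0 ≤ b →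
      IntervalIntegrable (fun s => K (T s v)) volume a b := fun v a b ha hb =>
    ((hcontKT v).mono fun y hy => le_trans (le_min ha hb) hy.1).intervalIntegrable
  have hiin : ∀ (v : X) (a b : ℝ), 0 ≤ a → 0 ≤ b →
      IntervalIntegrable (fun s => ‖K (T s v)‖) volume a b := fun v a b ha hb =>
    (hii v a b ha hb).norm
  -- the basic functional
  set Φ : X → ℝ := fun v => ∫ s in (0:ℝ)..t, ‖K (T s v)‖ with hΦdef
  have hΦ_sub : ∀ v w : X, Φ v - Φ w ≤ (t * (‖K‖ * M')) * ‖v - w‖ := by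
    intro v w
    rw [hΦdef]
    simp only []
    rw [← intervalIntegral.integral_sub (hiin v 0 t le_rfl ht.le) (hiin w 0 t le_rfl ht.le)]
    calc (∫ s in (0:ℝ)..t, (‖K (T s v)‖ - ‖K (T s w)‖))
        ≤ ∫ _ in (0:ℝ)..t, (‖K‖ * (M' * ‖v - w‖)) := by
          apply intervalIntegral.integral_mono_on ht.le
            ((hiin v 0 t le_rfl ht.le).sub (hiin w 0 t le_rfl ht.le)) intervalIntegrable_const
          intro s hs
          calc ‖K (T s v)‖ - ‖K (T s w)‖ ≤ ‖K (T s v) - K (T s w)‖ := norm_sub_norm_le _ _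
            _ = ‖K (T s (v - w))‖ := by rw [← map_sub, ← map_sub]
            _ ≤ ‖K‖ * ‖T s (v - w)‖ := K.le_opNorm _
            _ ≤ ‖K‖ * (M' * ‖v - w‖) :=
                mul_le_mul_of_nonneg_left (hbnd s hs.1 _) (norm_nonneg K)
      _ = (t * (‖K‖ * M')) * ‖v - w‖ := by
          rw [intervalIntegral.integral_const, smul_eq_mul]
          ring
  have hΦcont : Continuous Φ := by
    have hlip : LipschitzWith (t * (‖K‖ * M')).toNNReal Φ := by
      apply LipschitzWith.of_dist_le_mul
      intro v w
      rw [Real.dist_eq, dist_eq_norm]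
      have h1 := hΦ_sub v w
      have h2 := hΦ_sub w v
      rw [norm_sub_rev (w) (v)] at h2
      have h3 : |Φ v - Φ w| ≤ (t * (‖K‖ * M')) * ‖v - w‖ := abs_le.mpr ⟨by linarith, h1⟩
      refine h3.trans (mul_le_mul_of_nonneg_right ?_ (norm_nonneg _))
      exact Real.le_coe_toNNReal _
    exact hlip.continuous
  have hΦsmul : ∀ (c : ℝ), 0 ≤ c → ∀ v : X, Φ (c • v) = c * Φ v := by
    intro c hc v
    rw [hΦdef]
    simp only []
    rw [← intervalIntegral.integral_const_mul]
    congr 1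
    funext s
    rw [_root_.map_smul, _root_.map_smul, norm_smul, Real.norm_eq_abs, abs_of_nonneg hc]
  -- the key estimate for positive elements
  have lemP : ∀ a b : A.domain, 0 ≤ (a:X) → 0 ≤ (b:X) →
      Φ (A (a - b)) ≤ F (-(K ((a:X) + (b:X)))) := by
    intro a b ha hb
    have hpint : IntervalIntegrable (fun s => F (K (T s (A a))) + F (K (T s (A b))))
        volume 0 t := by
      apply ContinuousOn.intervalIntegrable
      apply ContinuousOn.add <;>
        exact (F.continuous.comp_continuousOn (hcontKT _)).mono hsub
    have step1 : Φ (A (a - b)) ≤ ∫ s in (0:ℝ)..t, (F (K (T s (A a))) + F (K (T s (A b)))) := by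
      rw [hΦdef]
      simp only []
      apply intervalIntegral.integral_mono_on ht.le (hiin _ 0 t le_rfl ht.le) hpint
      intro s hs
      have hs0 : (0:ℝ) ≤ s := hs.1
      have hpa : 0 ≤ K (T s (A a)) := by
        have h1 : K (T s (A a)) = C ⟨T s (a:X), hinv s hs0 _ a.2⟩ := by
          rw [hCK ⟨T s (a:X), hinv s hs0 _ a.2⟩, Tsg.gen_comm A hA hinv hs0 a]
        rw [h1]; exact hCpos _ (hTpos s hs0 _ ha)
      have hpb : 0 ≤ K (T s (A b)) := by
        have h1 : K (T s (A b)) = C ⟨T s (b:X), hinv s hs0 _ b.2⟩ := by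
          rw [hCK ⟨T s (b:X), hinv s hs0 _ b.2⟩, Tsg.gen_comm A hA hinv hs0 b]
        rw [h1]; exact hCpos _ (hTpos s hs0 _ hb)
      have hsplit : K (T s (A (a - b))) = K (T s (A a)) - K (T s (A b)) := by
        rw [A.map_sub a b, map_sub, map_sub]
      calc ‖K (T s (A (a - b)))‖
          = F |K (T s (A a)) - K (T s (A b))| := by
            rw [hsplit, ← norm_abs_eq_norm, hF _ (abs_nonneg _)]
        _ ≤ F (K (T s (A a)) + K (T s (A b))) := by
            apply Fmono
            calc |K (T s (A a)) - K (T s (A b))|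
                = |K (T s (A a)) + -(K (T s (A b)))| := by rw [sub_eq_add_neg]
              _ ≤ |K (T s (A a))| + |(-(K (T s (A b))))| := abs_add_le _ _
              _ = K (T s (A a)) + K (T s (A b)) := by
                  rw [abs_neg, abs_of_nonneg hpa, abs_of_nonneg hpb]
        _ = F (K (T s (A a))) + F (K (T s (A b))) := map_add F _ _
    have step2 : (∫ s in (0:ℝ)..t, (F (K (T s (A a))) + F (K (T s (A b)))))
        = F (K (T t ((a + b : A.domain) : X) - ((a + b : A.domain) : X))) := by
      have h1 : (fun s => F (K (T s (A a))) + F (K (T s (A b))))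
          = fun s => F (K (T s (A (a + b)))) := by
        funext s
        rw [← map_add F, ← map_add K, ← map_add (T s), ← A.map_add a b]
      rw [h1,
        ContinuousLinearMap.intervalIntegral_comp_comm F (hii (A (a+b)) 0 t le_rfl ht.le),
        ContinuousLinearMap.intervalIntegral_comp_comm K (Tsg.intInt le_rfl ht.le (A (a+b))),
        Tsg.ftc A hA ht.le (a + b)]
    have step3 : F (K (T t ((a + b : A.domain) : X) - ((a + b : A.domain) : X)))
        ≤ F (-(K ((a:X) + (b:X)))) := by
      have hco : ((a + b : A.domain) : X) = (a:X) + (b:X) := rfl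
      have h2 : K (T t ((a + b : A.domain) : X) - ((a + b : A.domain) : X))
          = K (T t ((a:X) + (b:X))) + -(K ((a:X) + (b:X))) := by
        rw [map_sub, hco, sub_eq_add_neg]
      rw [h2, map_add]
      have h3 : F (K (T t ((a:X) + (b:X)))) ≤ 0 := by
        have h4 := Fmono _ _ (hKneg _ (hTpos t ht.le _ (add_nonneg ha hb)))
        rwa [map_zero] at h4
      linarith
    exact step1.trans (le_of_eq step2 |>.trans step3)
  -- the approximation inequality
  have main_ineq : ∀ h : ℝ, 0 < h →
      Φ (h⁻¹ • (T h (x:X) - (x:X)))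
        ≤ F (-(K (h⁻¹ • ∫ r in (0:ℝ)..h, T r |(x:X)|))) := by
    intro h hh
    obtain ⟨hma, hva⟩ := Tsg.integral_mem_domain A hA hh ((x:X)⁺)
    obtain ⟨hmb, hvb⟩ := Tsg.integral_mem_domain A hA hh ((x:X)⁻)
    set a : A.domain := ⟨_, hma⟩ with hadef
    set b : A.domain := ⟨_, hmb⟩ with hbdef
    have ia := Tsg.intInt le_rfl hh.le ((x:X)⁺)
    have ib := Tsg.intInt le_rfl hh.le ((x:X)⁻)
    have hA_ab : (A (a - b) : X) = T h (x:X) - (x:X) := by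
      rw [A.map_sub a b, hva, hvb]
      have hxx : T h ((x:X)⁺ - (x:X)⁻) - ((x:X)⁺ - (x:X)⁻) = T h (x:X) - (x:X) := by
        rw [posPart_sub_negPart]
      rw [← hxx, map_sub (T h)]
      abel
    have hsum : ((a:X) + (b:X)) = ∫ r in (0:ℝ)..h, T r |(x:X)| := by
      rw [hadef, hbdef]
      simp only []
      rw [← intervalIntegral.integral_add ia ib]
      apply intervalIntegral.integral_congr
      intro r hr
      simp only []
      rw [← map_add, posPart_add_negPart]
    have hapos : 0 ≤ (a:X) :=
      intervalIntegral_nonneg_vec hh ia (fun r hr => hTpos r hr.1.le _ (posPart_nonneg _))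
    have hbpos : 0 ≤ (b:X) :=
      intervalIntegral_nonneg_vec hh ib (fun r hr => hTpos r hr.1.le _ (negPart_nonneg _))
    calc Φ (h⁻¹ • (T h (x:X) - (x:X)))
        = h⁻¹ * Φ (T h (x:X) - (x:X)) := hΦsmul _ (inv_nonneg.mpr hh.le) _
      _ = h⁻¹ * Φ (A (a - b)) := by rw [hA_ab]
      _ ≤ h⁻¹ * F (-(K ((a:X) + (b:X)))) :=
          mul_le_mul_of_nonneg_left (lemP a b hapos hbpos) (by positivity)
      _ = F (-(K (h⁻¹ • ((a:X) + (b:X))))) := by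
          rw [_root_.map_smul K, ← smul_neg, _root_.map_smul F, smul_eq_mul]
      _ = F (-(K (h⁻¹ • ∫ r in (0:ℝ)..h, T r |(x:X)|))) := by rw [hsum]
  -- pass to the limit
  have hlhs : Tendsto (fun h : ℝ => Φ (h⁻¹ • (T h (x:X) - (x:X)))) (𝓝[>] 0)
      (𝓝 (Φ (A x))) := (hΦcont.tendsto _).comp (hA.2 x)
  have hrhs0 : Tendsto (fun h : ℝ => h⁻¹ • ∫ r in (0:ℝ)..h, T r |(x:X)|) (𝓝[>] 0)
      (𝓝 |(x:X)|) := by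
    have h1 := Tsg.tendsto_avg |(x:X)| (le_refl (0:ℝ))
    rw [Tsg.apply_zero] at h1
    simpa using h1
  have hrhs : Tendsto (fun h : ℝ => F (-(K (h⁻¹ • ∫ r in (0:ℝ)..h, T r |(x:X)|)))) (𝓝[>] 0)
      (𝓝 (F (-(K |(x:X)|)))) := by
    have hcont2 : Continuous fun v : X => F (-(K v)) := F.continuous.comp K.continuous.neg
    exact (hcont2.tendsto _).comp hrhs0
  have hfin : Φ (A x) ≤ F (-(K |(x:X)|)) := by
    apply le_of_tendsto_of_tendsto hlhs hrhs
    filter_upwards [self_mem_nhdsWithin] with h hh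
    exact main_ineq h hh
  have hKabs : F (-(K |(x:X)|)) ≤ ‖K‖ * ‖(x:X)‖ := by
    have h0 : 0 ≤ -(K |(x:X)|) := neg_nonneg.mpr (hKneg _ (abs_nonneg _))
    rw [hF _ h0, norm_neg]
    calc ‖K |(x:X)|‖ ≤ ‖K‖ * ‖|(x:X)|‖ := K.le_opNorm _
      _ = ‖K‖ * ‖(x:X)‖ := by rw [norm_abs_eq_norm]
  -- rewrite the goal
  have h1 : ∀ s ∈ Icc (0:ℝ) t,
      (if h : (0:ℝ) ≤ s then ‖C ⟨T s (x:X), hinv s h (x:X) x.2⟩‖ else 0)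
        = ‖K (T s (A x))‖ := by
    intro s hs
    rw [dif_pos hs.1]
    congr 1
    rw [hCK ⟨T s (x:X), hinv s hs.1 (x:X) x.2⟩, Tsg.gen_comm A hA hinv hs.1 x]
  rw [setIntegral_congr_fun measurableSet_Icc h1, integral_Icc_eq_integral_Ioc,
    ← intervalIntegral.integral_of_le ht.le]
  exact hfin.trans hKabs
end

section
/- Let A generate a positive C₀-semigroup with negative growth bound on a Banach lattice X, and let B : U → X_{−1} and C : X → U be positive with U an AM-space and C bounded. If r(C A_{−1}^{−1} B) < 1 then for every λ > 0 one has 0 ≤ C R(λ, A_{−1}) B ≤ −C A_{−1}^{−1} B and hence r(C R(λ, A_{−1}) B) ≤ r(C A_{−1}^{−1} B) < 1; in particular 1 ∈ ρ(C R(λ, A_{−1}) B) for all λ > 0. -/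
open Filter Topology Set MeasureTheory

/-- `U` is an AM-space. -/
def IsAMSpace (U : Type*) [NormedAddCommGroup U] [Lattice U] [HasSolidNorm U] [IsOrderedAddMonoid U] : Prop :=
  ∀ x y : U, 0 ≤ x → 0 ≤ y → ‖x ⊔ y‖ = max ‖x‖ ‖y‖

set_option linter.unusedSectionVars false

open Filter Topology Set MeasureTheory

section LatticeSmul

variable {E : Type*} [NormedAddCommGroup E] [Lattice E] [HasSolidNorm E] [IsOrderedAddMonoid E] [NormedSpace ℝ E]

lemma RSR.nsmul_cancel : ∀ (k : ℕ) {x : E}, 0 ≤ ((2:ℝ)^k) • x → 0 ≤ x := by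
  intro k
  induction k with
  | zero => intro x h; simpa using h
  | succ n ih =>
    intro x h
    have h2 : (0:E) ≤ (2:ℝ) • x := by
      apply ih (x := (2:ℝ) • x)
      rw [smul_smul]
      rw [show (2:ℝ)^n * 2 = 2^(n+1) by ring]
      exact h
    have h2' : (0:E) ≤ 2 • x := by
      rwa [show ((2:ℝ) • x) = 2 • x by rw [← Nat.cast_smul_eq_nsmul ℝ]; norm_num] at h2
    exact nsmul_two_semiclosed h2'

lemma RSR.smul_nonneg {c : ℝ} {x : E} (hc : 0 ≤ c) (hx : 0 ≤ x) : 0 ≤ c • x := by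
  have hclosed : IsClosed {t : ℝ | 0 ≤ t • x} :=
    isClosed_nonneg.preimage (continuous_id.smul continuous_const)
  have hdy : ∀ (a k : ℕ), 0 ≤ ((a : ℝ)/2^k) • x := by
    intro a k
    apply RSR.nsmul_cancel k
    rw [smul_smul]
    have h2 : (2:ℝ)^k ≠ 0 := by positivity
    rw [show (2:ℝ)^k * ((a:ℝ)/2^k) = (a:ℝ) by field_simp]
    rw [Nat.cast_smul_eq_nsmul ℝ]
    exact nsmul_nonneg hx a
  -- approximate c by dyadics
  have hmem : c ∈ closure {t : ℝ | 0 ≤ t • x} := by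
    have htend : Tendsto (fun k : ℕ => ((Nat.floor (c * 2^k) : ℝ)/2^k)) atTop (𝓝 c) := by
      have hub : ∀ k : ℕ, ((Nat.floor (c * 2^k) : ℝ)/2^k) ≤ c := by
        intro k
        have h2 : (0:ℝ) < 2^k := by positivity
        rw [div_le_iff₀ h2]
        exact Nat.floor_le (by positivity)
      have hlb : ∀ k : ℕ, c - (1/2)^k ≤ ((Nat.floor (c * 2^k) : ℝ)/2^k) := by
        intro k
        have h2 : (0:ℝ) < 2^k := by positivity
        rw [sub_le_iff_le_add, div_add' _ _ _ (ne_of_gt h2), le_div_iff₀ h2]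
        have := (Nat.lt_floor_add_one (c * 2^k)).le
        have hp : (1/2:ℝ)^k * 2^k = 1 := by
          rw [← mul_pow]; norm_num
        nlinarith [this]
      have hc1 : Tendsto (fun k : ℕ => c - (1/2:ℝ)^k) atTop (𝓝 c) := by
        have := tendsto_pow_atTop_nhds_zero_of_lt_one (by norm_num : (0:ℝ) ≤ 1/2) (by norm_num)
        simpa using (tendsto_const_nhds (x := c)).sub this
      exact tendsto_of_tendsto_of_tendsto_of_le_of_le hc1 tendsto_const_nhds hlb hub
    exact mem_closure_of_tendsto htend (Eventually.of_forall fun k => hdy _ k)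
  rwa [hclosed.closure_eq] at hmem

lemma RSR.smul_le_smul {c : ℝ} {x y : E} (hc : 0 ≤ c) (h : x ≤ y) : c • x ≤ c • y := by
  have := RSR.smul_nonneg hc (sub_nonneg.mpr h)
  rwa [smul_sub, sub_nonneg] at this

lemma RSR.integral_nonneg [CompleteSpace E] {α : Type*} [MeasurableSpace α] {μ : Measure α}
    {f : α → E} (hf : ∀ᵐ a ∂μ, 0 ≤ f a) : 0 ≤ ∫ a, f a ∂μ := by
  by_cases hint : Integrable f μ
  · by_contra hneg
    have hconv : Convex ℝ {y : E | 0 ≤ y} := by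
      intro p hp q hq a b ha hb _
      exact add_nonneg (RSR.smul_nonneg ha hp) (RSR.smul_nonneg hb hq)
    obtain ⟨φ, u, hu1, hu2⟩ :=
      geometric_hahn_banach_point_closed hconv isClosed_nonneg hneg
    have hu0 : u < 0 := by simpa using hu2 0 (by simp [le_refl])
    have hφpos : ∀ y : E, 0 ≤ y → 0 ≤ φ y := by
      intro y hy
      by_contra hylt
      push_neg at hylt
      have ht : 0 ≤ u / φ y := le_div_iff_of_neg hylt |>.mpr (by simp [hu0.le]) 
      have := hu2 ((u / φ y) • y) (RSR.smul_nonneg ht hy)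
      rw [_root_.map_smul] at this
      rw [smul_eq_mul, div_mul_cancel₀ _ (ne_of_lt hylt)] at this
      exact lt_irrefl u this
    have h1 : 0 ≤ φ (∫ a, f a ∂μ) := by
      rw [← φ.integral_comp_comm hint]
      exact MeasureTheory.integral_nonneg_of_ae (hf.mono fun a ha => hφpos _ ha)
    exact lt_irrefl (0:ℝ) (h1.trans_lt (hu1.trans hu0))
  · rw [integral_undef hint]

end LatticeSmul


section OpAux

variable {U : Type*} [NormedAddCommGroup U] [Lattice U] [HasSolidNorm U] [IsOrderedAddMonoid U] [NormedSpace ℝ U] [CompleteSpace U]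

/-- positivity predicate for operators -/
def RSR.Pos (S : U →L[ℝ] U) : Prop := ∀ u : U, 0 ≤ u → 0 ≤ S u

lemma RSR.pos_mono {S : U →L[ℝ] U} (hS : RSR.Pos S) {u v : U} (h : u ≤ v) : S u ≤ S v := by
  have := hS (v - u) (sub_nonneg.mpr h)
  rw [map_sub, sub_nonneg] at this
  exact this

lemma RSR.abs_apply_le {S : U →L[ℝ] U} (hS : RSR.Pos S) (x : U) : |S x| ≤ S |x| := by
  rw [abs]
  apply sup_le
  · exact RSR.pos_mono hS (le_abs_self x)
  · rw [← map_neg]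
    exact RSR.pos_mono hS (neg_le_abs x)

lemma RSR.pos_mul {S T : U →L[ℝ] U} (hS : RSR.Pos S) (hT : RSR.Pos T) : RSR.Pos (S * T) :=
  fun u hu => hS _ (hT u hu)

lemma RSR.pos_smul {c : ℝ} (hc : 0 ≤ c) {S : U →L[ℝ] U} (hS : RSR.Pos S) : RSR.Pos (c • S) :=
  fun u hu => by simpa using RSR.smul_nonneg hc (hS u hu)

lemma RSR.pos_pow {S : U →L[ℝ] U} (hS : RSR.Pos S) (n : ℕ) : RSR.Pos (S ^ n) := by
  induction n with
  | zero => intro u hu; simpa using hu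
  | succ k ih =>
    rw [pow_succ]
    exact RSR.pos_mul ih hS

lemma RSR.pos_tsum {f : ℕ → U →L[ℝ] U} (hsum : Summable f) (hpos : ∀ n, RSR.Pos (f n)) :
    RSR.Pos (∑' n, f n) := by
  intro u hu
  have := (ContinuousLinearMap.apply ℝ U u).map_tsum hsum
  simp only [ContinuousLinearMap.apply_apply] at this
  rw [this]
  exact tsum_nonneg fun n => hpos n u hu

lemma RSR.ring_inverse_eq {A : Type*} [NormedRing A] {a b : A} (h1 : a * b = 1) (h2 : b * a = 1) :
    Ring.inverse a = b := by
  have : Ring.inverse (↑(⟨a, b, h1, h2⟩ : Aˣ) : A) = b := Ring.inverse_unit _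
  exact this

lemma RSR.radius_neg_le {A : Type*} [NormedRing A] [NormedAlgebra ℝ A] (a : A) :
    spectralRadius ℝ (-a) ≤ spectralRadius ℝ a := by
  rw [spectralRadius, spectralRadius]
  refine iSup₂_le fun k hk => ?_
  have hmem : -k ∈ spectrum ℝ a := by
    rw [← spectrum.neg_eq] at hk
    exact Set.mem_neg.mp hk
  calc (‖k‖₊ : ENNReal) = ‖-k‖₊ := by rw [nnnorm_neg]
  _ ≤ ⨆ k ∈ spectrum ℝ a, (‖k‖₊ : ENNReal) := le_iSup₂ (f := fun k _ => (‖k‖₊ : ENNReal)) (-k) hmem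

lemma RSR.radius_neg {A : Type*} [NormedRing A] [NormedAlgebra ℝ A] (a : A) :
    spectralRadius ℝ (-a) = spectralRadius ℝ a := by
  refine le_antisymm (RSR.radius_neg_le a) ?_
  have := RSR.radius_neg_le (-a)
  rwa [neg_neg] at this

/-- powers of dominated pairs -/
lemma RSR.dom_pow {S T : U →L[ℝ] U} (hS : RSR.Pos S) (hT : RSR.Pos T)
    (hST : ∀ u : U, 0 ≤ u → S u ≤ T u) (n : ℕ) :
    ∀ u : U, 0 ≤ u → (S ^ n) u ≤ (T ^ n) u := by
  induction n with
  | zero => intro u hu; simp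
  | succ k ih =>
    intro u hu
    rw [pow_succ, pow_succ, ContinuousLinearMap.mul_apply, ContinuousLinearMap.mul_apply]
    calc (S ^ k) (S u) ≤ (T ^ k) (S u) := ih (S u) (hS u hu)
    _ ≤ (T ^ k) (T u) := RSR.pos_mono (RSR.pos_pow hT k) (hST u hu)

lemma RSR.norm_pow_le {S T : U →L[ℝ] U} (hS : RSR.Pos S) (hT : RSR.Pos T)
    (hST : ∀ u : U, 0 ≤ u → S u ≤ T u) (n : ℕ) (x : U) : ‖(S ^ n) x‖ ≤ ‖(T ^ n) |x|‖ := by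
  have h1 : |(S ^ n) x| ≤ (S ^ n) |x| := RSR.abs_apply_le (RSR.pos_pow hS n) x
  have h2 : (S ^ n) |x| ≤ (T ^ n) |x| := RSR.dom_pow hS hT hST n |x| (abs_nonneg x)
  have h3 : (0:U) ≤ (S ^ n) |x| := RSR.pos_pow hS n _ (abs_nonneg x)
  apply norm_le_norm_of_abs_le_abs
  rw [abs_of_nonneg (h3.trans h2)]
  exact h1.trans h2
end OpAux

section Pringsheim


open ENNReal

variable {U : Type*} [NormedAddCommGroup U] [Lattice U] [HasSolidNorm U] [IsOrderedAddMonoid U] [NormedSpace ℝ U] [CompleteSpace U]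

set_option maxHeartbeats 2000000
set_option synthInstance.maxHeartbeats 1000000
lemma RSR.radius_le_radius {S T : U →L[ℝ] U} (hS : RSR.Pos S) (hT : RSR.Pos T)
    (hST : ∀ u : U, 0 ≤ u → S u ≤ T u) (hfin : spectralRadius ℝ T ≠ ⊤) :
    spectralRadius ℝ S ≤ spectralRadius ℝ T := by
  set rc : ℝ := (spectralRadius ℝ T).toReal with hrc
  have hrc0 : 0 ≤ rc := ENNReal.toReal_nonneg
  have hofReal : ENNReal.ofReal rc = spectralRadius ℝ T := ENNReal.ofReal_toReal hfin
  have hunit : ∀ μ : ℝ, rc < μ → IsUnit (algebraMap ℝ (U →L[ℝ] U) μ - T) := by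
    intro μ hμ
    have h1 : spectralRadius ℝ T < (‖μ‖₊ : ℝ≥0∞) := by
      rw [← hofReal, show ((‖μ‖₊ : ℝ≥0∞)) = ‖μ‖ₑ from rfl, Real.enorm_eq_ofReal (hrc0.trans hμ.le)]
      exact (ENNReal.ofReal_lt_ofReal_iff (hrc0.trans_lt hμ)).mpr hμ
    exact spectrum.mem_resolventSet_iff.mp (spectrum.mem_resolventSet_of_spectralRadius_lt h1)
  set res : ℝ → (U →L[ℝ] U) := fun μ => Ring.inverse (algebraMap ℝ (U →L[ℝ] U) μ - T) with hres
  have hmulres : ∀ μ : ℝ, rc < μ → (algebraMap ℝ (U →L[ℝ] U) μ - T) * res μ = 1 :=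
    fun μ h => Ring.mul_inverse_cancel _ (hunit μ h)
  have hresmul : ∀ μ : ℝ, rc < μ → res μ * (algebraMap ℝ (U →L[ℝ] U) μ - T) = 1 :=
    fun μ h => Ring.inverse_mul_cancel _ (hunit μ h)
  -- Neumann step to the left
  have hstep : ∀ μ ν : ℝ, rc < μ → rc < ν → ν ≤ μ → (μ - ν) * ‖res μ‖ < 1 →
      RSR.Pos (res μ) → RSR.Pos (res ν) := by
    intro μ ν hμ hν hνμ hsmall hpos
    have hc : 0 ≤ μ - ν := by linarith
    have hxn : ‖(μ - ν) • res μ‖ < 1 := by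
      calc ‖(μ - ν) • res μ‖ = ‖μ - ν‖ * ‖res μ‖ := norm_smul (β := U →L[ℝ] U) _ _
      _ = (μ - ν) * ‖res μ‖ := by rw [Real.norm_eq_abs, abs_of_nonneg hc]
      _ < 1 := hsmall
    have hsum : Summable (fun n : ℕ => ((μ - ν) • res μ) ^ n) :=
      summable_geometric_of_norm_lt_one hxn
    have hgm := geom_series_mul_neg _ hxn
    have hmg := mul_neg_geom_series _ hxn
    have hfact : algebraMap ℝ (U →L[ℝ] U) ν - T
        = (algebraMap ℝ (U →L[ℝ] U) μ - T) * (1 - (μ - ν) • res μ) := by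
      rw [mul_sub, mul_one, mul_smul_comm, hmulres μ hμ]
      rw [Algebra.algebraMap_eq_smul_one, Algebra.algebraMap_eq_smul_one, sub_smul]
      abel
    have hinv : res ν = (∑' n : ℕ, ((μ - ν) • res μ) ^ n) * res μ := by
      apply RSR.ring_inverse_eq
      · rw [hfact, mul_assoc, ← mul_assoc (1 - (μ - ν) • res μ), hmg, one_mul]
        exact hmulres μ hμ
      · rw [hfact, mul_assoc ((∑' n : ℕ, ((μ - ν) • res μ) ^ n)) (res μ),
          ← mul_assoc (res μ), hresmul μ hμ, one_mul, hgm]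
    rw [hinv, ← hsum.tsum_mul_right (res μ)]
    apply RSR.pos_tsum (hsum.mul_right (res μ))
    intro n
    exact RSR.pos_mul (RSR.pos_pow (RSR.pos_smul hc hpos) n) hpos
  -- base case: Neumann series in T
  have hbase : ∀ μ : ℝ, ‖T‖ < μ → rc < μ → RSR.Pos (res μ) := by
    intro μ h1 h2
    have hμ0 : 0 < μ := (norm_nonneg T).trans_lt h1
    set x : U →L[ℝ] U := μ⁻¹ • T with hx
    have hxn : ‖x‖ < 1 := by
      rw [hx]
      calc ‖μ⁻¹ • T‖ = ‖μ⁻¹‖ * ‖T‖ := norm_smul (β := U →L[ℝ] U) _ _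
      _ = μ⁻¹ * ‖T‖ := by rw [Real.norm_eq_abs, abs_of_nonneg (inv_nonneg.mpr hμ0.le)]
      _ < 1 := by
          rw [← div_eq_inv_mul]
          exact (div_lt_one hμ0).mpr h1
    have hsum : Summable (fun n : ℕ => x ^ n) := summable_geometric_of_norm_lt_one hxn
    have hfact : algebraMap ℝ (U →L[ℝ] U) μ - T = μ • (1 - x) := by
      rw [smul_sub, hx, smul_smul, mul_inv_cancel₀ (ne_of_gt hμ0), one_smul,
        Algebra.algebraMap_eq_smul_one]
    have hinv : res μ = μ⁻¹ • ∑' n : ℕ, x ^ n := by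
      apply RSR.ring_inverse_eq
      · rw [hfact, smul_mul_assoc, mul_smul_comm, smul_smul, mul_inv_cancel₀ (ne_of_gt hμ0),
          one_smul, mul_neg_geom_series x hxn]
      · rw [hfact, smul_mul_assoc, mul_smul_comm, smul_smul, inv_mul_cancel₀ (ne_of_gt hμ0),
          one_smul, geom_series_mul_neg x hxn]
    rw [hinv]
    exact RSR.pos_smul (inv_nonneg.mpr hμ0.le)
      (RSR.pos_tsum hsum (fun n => RSR.pos_pow (RSR.pos_smul (inv_nonneg.mpr hμ0.le) hT) n))
  -- continuity of the resolvent
  have hcontres : ∀ μ : ℝ, rc < μ → ContinuousAt res μ := by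
    intro μ hμ
    have h1 : Continuous (fun ν : ℝ => algebraMap ℝ (U →L[ℝ] U) ν - T) := by
      have : (fun ν : ℝ => algebraMap ℝ (U →L[ℝ] U) ν - T)
          = fun ν : ℝ => ν • (1 : U →L[ℝ] U) - T := by
        funext ν; rw [Algebra.algebraMap_eq_smul_one]
      rw [this]
      exact (continuous_id.smul continuous_const).sub continuous_const
    have h2 : ContinuousAt Ring.inverse (algebraMap ℝ (U →L[ℝ] U) μ - T) := by
      have hu := hunit μ hμ
      have := NormedRing.inverse_continuousAt hu.unit
      rwa [hu.unit_spec] at this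
    have h3 : ContinuousAt (fun ν : ℝ => Ring.inverse (algebraMap ℝ (U →L[ℝ] U) ν - T)) μ :=
      ContinuousAt.comp (f := fun ν : ℝ => algebraMap ℝ (U →L[ℝ] U) ν - T) (x := μ)
        h2 h1.continuousAt
    exact h3
  -- positivity of the resolvent everywhere to the right of rc
  have hposres : ∀ lam : ℝ, rc < lam → RSR.Pos (res lam) := by
    intro lam0 hlam0
    set Λ : ℝ := max lam0 (‖T‖ + rc + 1) with hΛ
    have hΛT : ‖T‖ < Λ := lt_of_lt_of_le (by linarith) (le_max_right _ _)
    have hlamL : lam0 ≤ Λ := le_max_left _ _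
    have hΛrc : rc < Λ := lt_of_lt_of_le hlam0 hlamL
    set K : Set ℝ := {μ : ℝ | μ ∈ Set.Icc lam0 Λ ∧ ∀ ν, ν ∈ Set.Icc μ Λ → RSR.Pos (res ν)} with hK
    have hAK : Λ ∈ K := by
      refine ⟨⟨hlamL, le_rfl⟩, fun ν hν => ?_⟩
      have : ν = Λ := le_antisymm hν.2 hν.1
      rw [this]; exact hbase Λ hΛT hΛrc
    have hKb : BddBelow K := ⟨lam0, fun μ hμ => hμ.1.1⟩
    have hKne : K.Nonempty := ⟨Λ, hAK⟩
    set s : ℝ := sInf K with hsdef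
    have hsl : lam0 ≤ s := le_csInf hKne (fun μ hμ => hμ.1.1)
    have hsu : s ≤ Λ := csInf_le hKb hAK
    have hsrc : rc < s := lt_of_lt_of_le hlam0 hsl
    have hopen : ∀ ν, s < ν → ν ≤ Λ → RSR.Pos (res ν) := by
      intro ν h1 h2
      obtain ⟨μ, hμK, hμν⟩ := exists_lt_of_csInf_lt hKne h1
      exact hμK.2 ν ⟨hμν.le, h2⟩
    have hPs : RSR.Pos (res s) := by
      rcases eq_or_lt_of_le hsu with heq | hlt
      · rw [heq]; exact hbase Λ hΛT hΛrc
      · have hseq : Filter.Tendsto (fun n : ℕ => s + (Λ - s)/(n+1)) Filter.atTop (nhds s) := by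
          have h0 : Filter.Tendsto (fun n : ℕ => (Λ - s) * (1/((n:ℝ)+1))) Filter.atTop (nhds 0) := by
            simpa using tendsto_one_div_add_atTop_nhds_zero_nat.const_mul (Λ - s)
          have := Filter.Tendsto.add (tendsto_const_nhds (x := s)) h0
          simp only [add_zero] at this
          convert this using 2 with n
          rw [mul_one_div]
        have hco : Filter.Tendsto (fun n : ℕ => res (s + (Λ - s)/(n+1))) Filter.atTop
            (nhds (res s)) := (hcontres s hsrc).tendsto.comp hseq
        intro u hu
        have hev : Filter.Tendsto (fun n : ℕ => res (s + (Λ - s)/(n+1)) u) Filter.atTop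
            (nhds (res s u)) := by
          have := ((ContinuousLinearMap.apply ℝ U u).continuous.tendsto (res s)).comp hco
          exact this
        refine isClosed_nonneg.mem_of_tendsto hev (Filter.Eventually.of_forall fun n => ?_)
        have hpos : 0 < (Λ - s)/((n:ℝ)+1) := div_pos (sub_pos.mpr hlt) (by positivity)
        have hle : (Λ - s)/((n:ℝ)+1) ≤ Λ - s := by
          apply div_le_self (by linarith) (by norm_num)
        exact hopen _ (by linarith) (by linarith) u hu
    rcases eq_or_lt_of_le hsl with heq | hlt2
    · rw [heq]; exact hPs
    · exfalso
      set δ : ℝ := min (s - lam0) (1/(2*(‖res s‖+1))) with hδ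
      have hδ0 : 0 < δ := lt_min (by linarith) (by positivity)
      have hδ1 : δ ≤ s - lam0 := min_le_left _ _
      have hδ2 : δ ≤ 1/(2*(‖res s‖+1)) := min_le_right _ _
      have hmem : s - δ ∈ K := by
        refine ⟨⟨by linarith, by linarith⟩, fun ν hν => ?_⟩
        rcases le_or_gt s ν with h | h
        · rcases eq_or_lt_of_le h with he | hl
          · rw [← he]; exact hPs
          · exact hopen ν hl hν.2
        · have hνrc : rc < ν := by have := hν.1; linarith
          refine hstep s ν hsrc hνrc h.le ?_ hPs
          have h1 : s - ν ≤ δ := by have := hν.1; linarith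
          have hnn : 0 ≤ ‖res s‖ := norm_nonneg _
          calc (s - ν)*‖res s‖ ≤ (1/(2*(‖res s‖+1)))*‖res s‖ := by
                apply mul_le_mul_of_nonneg_right _ hnn
                linarith
          _ < 1 := by
                rw [div_mul_eq_mul_div, one_mul, div_lt_one (by positivity)]
                linarith
      have := csInf_le hKb hmem
      linarith
  -- conclude the radius bound
  have hmain : ∀ t : ℝ, rc < t → spectralRadius ℝ S ≤ ENNReal.ofReal t := by
    intro t ht
    set lam : ℝ := (rc + t)/2 with hlam
    have hlam1 : rc < lam := by rw [hlam]; linarith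
    have hlam2 : lam < t := by rw [hlam]; linarith
    have hlam0 : 0 < lam := lt_of_le_of_lt hrc0 hlam1
    have hP := hposres lam hlam1
    have hkey : ∀ u : U, res lam u = lam⁻¹ • (u + T (res lam u)) := by
      intro u
      have h1 := hmulres lam hlam1
      have h2 := congrArg (fun (O : U →L[ℝ] U) => O u) h1
      simp only [ContinuousLinearMap.mul_apply, ContinuousLinearMap.sub_apply,
        Algebra.algebraMap_eq_smul_one, ContinuousLinearMap.smul_apply,
        ContinuousLinearMap.one_apply, ContinuousLinearMap.coe_smul', Pi.smul_apply] at h2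
      -- h2 : lam • res lam u - T (res lam u) = u
      have h3 : lam • (res lam u) = u + T (res lam u) := by
        have h4 := eq_add_of_sub_eq h2
        rw [h4]
      rw [← h3, inv_smul_smul₀ (ne_of_gt hlam0)]
    have hgeo : ∀ n : ℕ, ∀ u : U, 0 ≤ u → (lam⁻¹)^(n+1) • ((T^n) u) ≤ res lam u := by
      intro n
      induction n with
      | zero =>
        intro u hu
        rw [hkey u]
        simp only [zero_add, pow_one, pow_zero, ContinuousLinearMap.one_apply]
        exact RSR.smul_le_smul (inv_nonneg.mpr hlam0.le)
          (le_add_of_nonneg_right (hT _ (hP u hu)))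
      | succ k ih =>
        intro u hu
        rw [hkey u]
        have h3 : T ((lam⁻¹)^(k+1) • ((T^k) u)) ≤ T (res lam u) := RSR.pos_mono hT (ih u hu)
        rw [_root_.map_smul] at h3
        have h4 : (T^(k+1)) u = T ((T^k) u) := by
          rw [pow_succ']; rfl
        rw [← h4] at h3
        have h5 : lam⁻¹ • ((lam⁻¹)^(k+1) • ((T^(k+1)) u)) ≤ lam⁻¹ • T (res lam u) :=
          RSR.smul_le_smul (inv_nonneg.mpr hlam0.le) h3
        rw [smul_smul, ← pow_succ'] at h5
        calc (lam⁻¹)^(k+1+1) • ((T^(k+1)) u) ≤ lam⁻¹ • T (res lam u) := h5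
        _ ≤ lam⁻¹ • u + lam⁻¹ • T (res lam u) := by
            apply le_add_of_nonneg_left
            exact RSR.smul_nonneg (inv_nonneg.mpr hlam0.le) hu
        _ = lam⁻¹ • (u + T (res lam u)) := by rw [smul_add]
    have hnormbound : ∀ n : ℕ, ‖S^n‖ ≤ ‖res lam‖ * lam^(n+1) := by
      intro n
      apply ContinuousLinearMap.opNorm_le_bound _
        (mul_nonneg (norm_nonneg _) (pow_nonneg hlam0.le _))
      intro x
      have h1 : ‖(S^n) x‖ ≤ ‖(T^n) |x|‖ := RSR.norm_pow_le hS hT hST n x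
      have h2 : (lam⁻¹)^(n+1) • ((T^n) |x|) ≤ res lam |x| := hgeo n |x| (abs_nonneg x)
      have h3 : (0:U) ≤ (lam⁻¹)^(n+1) • ((T^n) |x|) :=
        RSR.smul_nonneg (pow_nonneg (inv_nonneg.mpr hlam0.le) _) (RSR.pos_pow hT n _ (abs_nonneg x))
      have h4 : ‖(lam⁻¹)^(n+1) • ((T^n) |x|)‖ ≤ ‖res lam |x|‖ := by
        apply norm_le_norm_of_abs_le_abs
        rw [abs_of_nonneg h3, abs_of_nonneg (h3.trans h2)]
        exact h2
      rw [norm_smul, Real.norm_eq_abs,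
        abs_of_nonneg (pow_nonneg (inv_nonneg.mpr hlam0.le) (n+1))] at h4
      have h5 : ‖res lam |x|‖ ≤ ‖res lam‖ * ‖x‖ := by
        calc ‖res lam |x|‖ ≤ ‖res lam‖ * ‖|x|‖ := (res lam).le_opNorm _
        _ = ‖res lam‖ * ‖x‖ := by rw [norm_abs_eq_norm]
      have h6 : ‖(T^n) |x|‖ = lam^(n+1) * ((lam⁻¹)^(n+1) * ‖(T^n) |x|‖) := by
        rw [← mul_assoc, ← mul_pow, mul_inv_cancel₀ (ne_of_gt hlam0), one_pow, one_mul]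
      calc ‖(S^n) x‖ ≤ ‖(T^n) |x|‖ := h1
      _ = lam^(n+1) * ((lam⁻¹)^(n+1) * ‖(T^n) |x|‖) := h6
      _ ≤ lam^(n+1) * (‖res lam‖ * ‖x‖) := by
          apply mul_le_mul_of_nonneg_left (h4.trans h5) (by positivity)
      _ = ‖res lam‖ * lam^(n+1) * ‖x‖ := by ring
    refine le_trans (spectrum.spectralRadius_le_liminf_pow_nnnorm_pow_one_div ℝ S) ?_
    set κ : ℝ≥0∞ := ENNReal.ofReal (‖res lam‖ * lam) with hκdef
    have hκ : κ ≠ ⊤ := ENNReal.ofReal_ne_top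
    have hE : (1:ℝ≥0∞) < ENNReal.ofReal (t/lam) := by
      rw [ENNReal.one_lt_ofReal]
      exact (one_lt_div hlam0).mpr hlam2
    have hev : ∀ᶠ n : ℕ in Filter.atTop,
        (‖S^n‖₊ : ℝ≥0∞)^(1/(n:ℝ)) ≤ ENNReal.ofReal t := by
      filter_upwards [ENNReal.eventually_pow_one_div_le hκ hE,
        Filter.eventually_ge_atTop 1] with n h1 h2
      have hn0 : (n:ℝ) ≠ 0 := by
        have : 0 < n := h2
        exact_mod_cast this.ne'
      have hb : (‖S^n‖₊ : ℝ≥0∞) ≤ κ * (ENNReal.ofReal lam)^n := by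
        rw [show ((‖S^n‖₊ : ℝ≥0∞)) = ‖S^n‖ₑ from rfl, ← ofReal_norm, hκdef, ← ENNReal.ofReal_pow hlam0.le,
          ← ENNReal.ofReal_mul (by positivity)]
        apply ENNReal.ofReal_le_ofReal
        calc ‖S^n‖ ≤ ‖res lam‖ * lam^(n+1) := hnormbound n
        _ = ‖res lam‖ * lam * lam^n := by ring
      calc (‖S^n‖₊ : ℝ≥0∞)^(1/(n:ℝ)) ≤ (κ * (ENNReal.ofReal lam)^n)^(1/(n:ℝ)) :=
            ENNReal.rpow_le_rpow hb (by positivity)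
      _ = κ^(1/(n:ℝ)) * ((ENNReal.ofReal lam)^n)^(1/(n:ℝ)) :=
            ENNReal.mul_rpow_of_nonneg _ _ (by positivity)
      _ = κ^(1/(n:ℝ)) * ENNReal.ofReal lam := by
            rw [← ENNReal.rpow_natCast (ENNReal.ofReal lam) n, ← ENNReal.rpow_mul]
            congr 1
            rw [mul_one_div, div_self hn0, ENNReal.rpow_one]
      _ ≤ ENNReal.ofReal (t/lam) * ENNReal.ofReal lam := mul_le_mul_left h1 _
      _ = ENNReal.ofReal t := by
            rw [← ENNReal.ofReal_mul (div_nonneg (le_of_lt (hlam0.trans hlam2)) hlam0.le),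
              div_mul_cancel₀ _ (ne_of_gt hlam0)]
    calc Filter.atTop.liminf (fun n : ℕ => (‖S^n‖₊ : ℝ≥0∞)^(1/(n:ℝ)))
        ≤ Filter.atTop.liminf (fun _ : ℕ => ENNReal.ofReal t) := Filter.liminf_le_liminf hev
    _ = ENNReal.ofReal t := Filter.liminf_const _
  refine ENNReal.le_of_forall_pos_le_add fun ε hε hlt => ?_
  calc spectralRadius ℝ S ≤ ENNReal.ofReal (rc + ε) := hmain _ (by
        have : (0:ℝ) < ε := hε
        linarith)
  _ = ENNReal.ofReal rc + ENNReal.ofReal ε := ENNReal.ofReal_add hrc0 ε.2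
  _ = spectralRadius ℝ T + ε := by rw [hofReal, ENNReal.ofReal_coe_nnreal]

end Pringsheim

section Laplace

set_option maxHeartbeats 1000000

lemma RSR.laplace {X Xm1 : Type*}
    [NormedAddCommGroup X] [Lattice X] [HasSolidNorm X] [IsOrderedAddMonoid X] [NormedSpace ℝ X] [CompleteSpace X]
    [NormedAddCommGroup Xm1] [NormedSpace ℝ Xm1] [CompleteSpace Xm1]
    (Tsg : C0Semigroup X) (hω : Tsg.NegGrowthBound)
    (j : X →L[ℝ] Xm1) (hj : Function.Injective j)
    (Tm1 : C0Semigroup Xm1)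
    (hTm1 : ∀ s : ℝ, 0 ≤ s → ∀ x : X, Tm1.toFun s (j x) = j (Tsg.toFun s x))
    (Am1 : Xm1 →ₗ.[ℝ] Xm1) (hAm1 : Tm1.IsGenerator Am1)
    (Rl : ℝ → Xm1 →L[ℝ] X) {l : ℝ} (hl : 0 ≤ l)
    (hRl : IsResolventAt Am1 l (j.comp (Rl l)))
    (x : X) :
    Rl l (j x) = ∫ t in Set.Ioi (0:ℝ), Real.exp (-(l*t)) • Tsg.toFun t x := by
  obtain ⟨ε, hε, M, hM⟩ := hω
  set f : ℝ → X := fun t => Real.exp (-(l*t)) • Tsg.toFun t x with hfdef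
  have hfc : ContinuousOn f (Ici 0) := by
    apply ContinuousOn.smul _ (Tsg.strongCont' x)
    exact (Real.continuous_exp.comp (continuous_const.mul continuous_id).neg).continuousOn
  have hf0 : f 0 = x := by
    rw [hfdef]
    simp [Tsg.map_zero']
  have hmeas : AEStronglyMeasurable f (volume.restrict (Ioi 0)) :=
    (hfc.mono Set.Ioi_subset_Ici_self).aestronglyMeasurable measurableSet_Ioi
  have hint : IntegrableOn f (Ioi 0) volume := by
    apply Integrable.mono' ((exp_neg_integrableOn_Ioi 0 hε).const_mul (|M| * ‖x‖)) hmeas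
    refine (ae_restrict_iff' measurableSet_Ioi).mpr (Eventually.of_forall fun t ht => ?_)
    have ht0 : (0:ℝ) ≤ t := (le_of_lt ht)
    have e1 : Real.exp (-(l*t)) ≤ 1 := by
      rw [show (1:ℝ) = Real.exp 0 by rw [Real.exp_zero]]
      apply Real.exp_le_exp.mpr
      have : 0 ≤ l * t := mul_nonneg hl ht0
      linarith
    have hTx : ‖Tsg.toFun t x‖ ≤ M * Real.exp (-ε*t) * ‖x‖ := by
      calc ‖Tsg.toFun t x‖ ≤ ‖Tsg.toFun t‖ * ‖x‖ := (Tsg.toFun t).le_opNorm x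
      _ ≤ M * Real.exp (-ε*t) * ‖x‖ :=
          mul_le_mul_of_nonneg_right (hM t ht0) (norm_nonneg _)
    calc ‖f t‖ = Real.exp (-(l*t)) * ‖Tsg.toFun t x‖ := by
          rw [hfdef]; rw [norm_smul, Real.norm_eq_abs, Real.abs_exp]
    _ ≤ 1 * ‖Tsg.toFun t x‖ := mul_le_mul_of_nonneg_right e1 (norm_nonneg _)
    _ = ‖Tsg.toFun t x‖ := one_mul _
    _ ≤ M * Real.exp (-ε*t) * ‖x‖ := hTx
    _ ≤ |M| * Real.exp (-ε*t) * ‖x‖ := by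
        apply mul_le_mul_of_nonneg_right _ (norm_nonneg _)
        exact mul_le_mul_of_nonneg_right (le_abs_self M) (Real.exp_pos _).le
    _ = |M| * ‖x‖ * Real.exp (-ε*t) := by ring
  set V : X := ∫ t in Ioi (0:ℝ), f t with hVdef
  have hsplit : ∀ s : ℝ, 0 ≤ s → V = (∫ t in Ioc 0 s, f t) + ∫ t in Ioi s, f t := by
    intro s hs
    rw [hVdef, ← Set.Ioc_union_Ioi_eq_Ioi hs,
      setIntegral_union (Set.Ioc_disjoint_Ioi le_rfl) measurableSet_Ioi
        (hint.mono_set Set.Ioc_subset_Ioi_self) (hint.mono_set (Set.Ioi_subset_Ioi hs))]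
  have hshift : ∀ s : ℝ, 0 ≤ s → Tsg.toFun s V = Real.exp (l*s) • ∫ t in Ioi s, f t := by
    intro s hs
    calc Tsg.toFun s V = ∫ t in Ioi (0:ℝ), Tsg.toFun s (f t) :=
          ((Tsg.toFun s).integral_comp_comm hint).symm
    _ = ∫ t in Ioi (0:ℝ), Real.exp (l*s) • f (t+s) := by
        apply setIntegral_congr_fun measurableSet_Ioi
        intro t ht
        show Tsg.toFun s (Real.exp (-(l*t)) • Tsg.toFun t x)
            = Real.exp (l*s) • (Real.exp (-(l*(t+s))) • Tsg.toFun (t+s) x)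
        rw [_root_.map_smul, smul_smul, ← Real.exp_add]
        congr 1
        · congr 1; ring
        · rw [show t + s = s + t from add_comm t s, Tsg.map_add' s t hs (le_of_lt ht)]; rfl
    _ = Real.exp (l*s) • ∫ t in Ioi (0:ℝ), f (t+s) := by rw [integral_smul]
    _ = Real.exp (l*s) • ∫ t in Ioi s, f t := by
        congr 1
        rw [← integral_indicator measurableSet_Ioi, ← integral_indicator measurableSet_Ioi]
        have hind : (Ioi (0:ℝ)).indicator (fun t => f (t+s)) = fun t => (Ioi s).indicator f (t+s) := by
          funext t
          by_cases ht : t ∈ Ioi (0:ℝ)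
          · rw [Set.indicator_of_mem ht,
              Set.indicator_of_mem (show t + s ∈ Ioi s from (lt_add_iff_pos_left s).mpr ht)]
          · rw [Set.indicator_of_notMem ht, Set.indicator_of_notMem (by
              intro hc
              exact ht ((lt_add_iff_pos_left s).mp hc))]
        rw [hind, MeasureTheory.integral_add_right_eq_self ((Ioi s).indicator f) s]
  -- tendsto of the tail integral
  have htail : Tendsto (fun s => ∫ t in Ioi s, f t) (𝓝[>] (0:ℝ)) (𝓝 V) := by
    obtain ⟨C, hC⟩ := (isCompact_Icc (a := (0:ℝ)) (b := 1)).exists_bound_of_continuousOn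
      (hfc.mono (Set.Icc_subset_Ici_self))
    rw [tendsto_iff_norm_sub_tendsto_zero]
    apply squeeze_zero' (g := fun s => C * s)
    · exact Eventually.of_forall fun s => norm_nonneg _
    · filter_upwards [Ioo_mem_nhdsGT_of_mem (Set.left_mem_Ico.mpr zero_lt_one)] with s hs
      have hdiffeq : (∫ t in Ioi s, f t) - V = -∫ t in Ioc 0 s, f t := by
        rw [hsplit s hs.1.le]; abel
      rw [hdiffeq, norm_neg]
      calc ‖∫ t in Ioc 0 s, f t‖ ≤ C * (volume (Ioc (0:ℝ) s)).toReal := by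
            apply norm_setIntegral_le_of_norm_le_const_ae'  _
            · exact Eventually.of_forall fun t ht => hC t ⟨ht.1.le, ht.2.trans hs.2.le⟩
            · rw [Real.volume_Ioc]; exact ENNReal.ofReal_lt_top
      _ = C * s := by rw [Real.volume_Ioc, sub_zero, ENNReal.toReal_ofReal hs.1.le]
    · have hcm : Tendsto (fun s : ℝ => C * s) (𝓝 0) (𝓝 0) := by
        have h9 : Continuous (fun s : ℝ => C * s) := continuous_const.mul continuous_id
        simpa using h9.tendsto (0:ℝ)
      exact hcm.mono_left nhdsWithin_le_nhds
  -- scalar slope limit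
  have hscal : Tendsto (fun s : ℝ => s⁻¹ * (Real.exp (l*s) - 1)) (𝓝[>] (0:ℝ)) (𝓝 l) := by
    have hd : HasDerivAt (fun s : ℝ => Real.exp (l*s)) l 0 := by
      have := ((hasDerivAt_id (0:ℝ)).const_mul l).exp
      simpa using this
    have hs1 := hasDerivAt_iff_tendsto_slope.mp hd
    have hs2 := hs1.mono_left
      (nhdsWithin_mono 0 (fun s hs => (ne_of_gt hs : s ≠ 0)))
    apply hs2.congr
    intro s
    rw [slope_def_field]
    rw [mul_zero, Real.exp_zero, sub_zero, div_eq_inv_mul]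
  -- mean value limit
  have hmean : Tendsto (fun s : ℝ => s⁻¹ • ∫ t in Ioc 0 s, f t) (𝓝[>] (0:ℝ)) (𝓝 x) := by
    rw [Metric.tendsto_nhdsWithin_nhds]
    intro ε' hε'
    have hcont0 : Tendsto f (𝓝[Ici 0] (0:ℝ)) (𝓝 x) := by
      have := hfc 0 Set.self_mem_Ici
      rwa [ContinuousWithinAt, hf0] at this
    rw [Metric.tendsto_nhdsWithin_nhds] at hcont0
    obtain ⟨δ, hδ0, hδ⟩ := hcont0 (ε'/2) (by linarith)
    refine ⟨min δ 1, lt_min hδ0 zero_lt_one, ?_⟩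
    intro s hs hsd
    have hs0 : (0:ℝ) < s := hs
    have hsδ : s < δ := by
      rw [Real.dist_eq, sub_zero, abs_of_pos hs0] at hsd
      exact lt_of_lt_of_le hsd (min_le_left _ _)
    have hintc : IntegrableOn f (Ioc 0 s) volume := hint.mono_set Set.Ioc_subset_Ioi_self
    have hvol : volume (Ioc (0:ℝ) s) < ⊤ := by
      rw [Real.volume_Ioc]; exact ENNReal.ofReal_lt_top
    have hxconst : (∫ _ in Ioc (0:ℝ) s, x) = s • x := by
      rw [setIntegral_const, Measure.real, Real.volume_Ioc, sub_zero, ENNReal.toReal_ofReal hs0.le]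
    have hdiff : (∫ t in Ioc 0 s, f t) - s • x = ∫ t in Ioc 0 s, (f t - x) := by
      rw [integral_sub hintc (integrableOn_const hvol.ne), hxconst]
    have hnorm : ‖∫ t in Ioc 0 s, (f t - x)‖ ≤ (ε'/2) * s := by
      calc ‖∫ t in Ioc 0 s, (f t - x)‖ ≤ (ε'/2) * (volume (Ioc (0:ℝ) s)).toReal := by
            apply norm_setIntegral_le_of_norm_le_const_ae' hvol
            refine Eventually.of_forall fun t ht => ?_
            have h1 : dist (f t) x < ε'/2 := by
              apply hδ (Set.mem_Ici.mpr ht.1.le)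
              rw [Real.dist_eq, sub_zero, abs_of_pos ht.1]
              exact lt_of_le_of_lt ht.2 hsδ
            rw [dist_eq_norm] at h1
            exact h1.le
      _ = (ε'/2) * s := by rw [Real.volume_Ioc, sub_zero, ENNReal.toReal_ofReal hs0.le]
    rw [dist_eq_norm]
    have hre : s⁻¹ • (∫ t in Ioc 0 s, f t) - x = s⁻¹ • ((∫ t in Ioc 0 s, f t) - s • x) := by
      rw [smul_sub, smul_smul, inv_mul_cancel₀ (ne_of_gt hs0), one_smul]
    rw [hre, hdiff, norm_smul, Real.norm_eq_abs, abs_of_pos (inv_pos.mpr hs0)]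
    calc s⁻¹ * ‖∫ t in Ioc 0 s, (f t - x)‖ ≤ s⁻¹ * ((ε'/2)*s) :=
          mul_le_mul_of_nonneg_left hnorm (inv_nonneg.mpr hs0.le)
    _ = ε'/2 := by field_simp
    _ < ε' := by linarith
  -- combine into the generator limit
  have hlim : Tendsto (fun s : ℝ => s⁻¹ • (Tsg.toFun s V - V)) (𝓝[>] (0:ℝ))
      (𝓝 (l • V - x)) := by
    have h4 := Tendsto.sub (hscal.smul htail) hmean
    refine h4.congr' ?_
    filter_upwards [self_mem_nhdsWithin] with s hs
    have hs0 : (0:ℝ) < s := hs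
    rw [hshift s hs0.le, hsplit s hs0.le]
    have halg : Real.exp (l*s) • (∫ t in Ioi s, f t)
        - ((∫ t in Ioc 0 s, f t) + ∫ t in Ioi s, f t)
        = (Real.exp (l*s) - 1) • (∫ t in Ioi s, f t) - ∫ t in Ioc 0 s, f t := by
      rw [sub_smul, one_smul]; abel
    rw [halg, smul_sub, smul_smul]
  -- transfer along j
  have hjlim : Tendsto (fun s : ℝ => s⁻¹ • (Tm1.toFun s (j V) - j V)) (𝓝[>] (0:ℝ))
      (𝓝 (j (l • V - x))) := by
    have hcomp := (j.continuous.tendsto (l • V - x)).comp hlim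
    refine hcomp.congr' ?_
    filter_upwards [self_mem_nhdsWithin] with s hs
    show j (s⁻¹ • (Tsg.toFun s V - V)) = s⁻¹ • (Tm1.toFun s (j V) - j V)
    rw [_root_.map_smul, map_sub, hTm1 s (le_of_lt hs)]
  have hdom : j V ∈ Am1.domain := (hAm1.1 (j V)).mpr ⟨_, hjlim⟩
  have hval : Am1 ⟨j V, hdom⟩ = j (l • V - x) :=
    tendsto_nhds_unique (hAm1.2 ⟨j V, hdom⟩) hjlim
  have happ := hRl.2 ⟨j V, hdom⟩
  have harg : l • (j V) - Am1 ⟨j V, hdom⟩ = j x := by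
    rw [hval, map_sub, _root_.map_smul]
    abel
  apply hj
  have : (j.comp (Rl l)) (j x) = j V := by
    rw [← harg]
    exact happ
  rw [← this]
  rfl

end Laplace

/-- Let `A` generate a positive `C₀`-semigroup with negative growth bound on a
Banach lattice `X`, `B : U → X₋₁` and `C : X → U` positive with `U` an
AM-space and `C` bounded.  Write `Q λ = C R(λ,A₋₁) B`, so `C A₋₁⁻¹ B = −Q 0`.
If `r(C A₋₁⁻¹ B) < 1` then for every `λ > 0`:
`0 ≤ C R(λ,A₋₁) B ≤ −C A₋₁⁻¹ B`, hence
`r(C R(λ,A₋₁) B) ≤ r(C A₋₁⁻¹ B) < 1`; in particular `1 ∈ ρ(C R(λ,A₋₁) B)`. -/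
theorem resolvent_spectral_radius_lt_one
    {X U Xm1 : Type*}
    [NormedAddCommGroup X] [Lattice X] [HasSolidNorm X] [IsOrderedAddMonoid X] [NormedSpace ℝ X] [CompleteSpace X]
    [NormedAddCommGroup U] [Lattice U] [HasSolidNorm U] [IsOrderedAddMonoid U] [NormedSpace ℝ U] [CompleteSpace U]
    [NormedAddCommGroup Xm1] [NormedSpace ℝ Xm1] [CompleteSpace Xm1]
    (Tsg : C0Semigroup X)
    (hTpos : ∀ s : ℝ, 0 ≤ s → ∀ x : X, 0 ≤ x → 0 ≤ Tsg.toFun s x)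
    (hω : Tsg.NegGrowthBound)
    (A : X →ₗ.[ℝ] X) (hA : Tsg.IsGenerator A)
    (j : X →L[ℝ] Xm1) (hj : Function.Injective j) (hjd : DenseRange j)
    (Tm1 : C0Semigroup Xm1)
    (hTm1 : ∀ s : ℝ, 0 ≤ s → ∀ x : X, Tm1.toFun s (j x) = j (Tsg.toFun s x))
    (Am1 : Xm1 →ₗ.[ℝ] Xm1) (hAm1 : Tm1.IsGenerator Am1)
    (hUam : IsAMSpace U)
    (B : U →ₗ[ℝ] Xm1)
    (hBpos : ∀ w : U, 0 ≤ w → B w ∈ closure (j '' {x : X | 0 ≤ x}))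
    (C : X →L[ℝ] U) (hCpos : ∀ x : X, 0 ≤ x → 0 ≤ C x)
    (Rl : ℝ → Xm1 →L[ℝ] X)
    (hRl : ∀ l : ℝ, 0 ≤ l → IsResolventAt Am1 l (j.comp (Rl l)))
    (Q : ℝ → U →L[ℝ] U) (hQ : ∀ (l : ℝ) (u : U), Q l u = C (Rl l (B u)))
    (hr : spectralRadius ℝ (-(Q 0)) < 1) :
    ∀ l : ℝ, 0 < l →
      (∀ u : U, 0 ≤ u → 0 ≤ Q l u ∧ Q l u ≤ Q 0 u) ∧
      spectralRadius ℝ (Q l) ≤ spectralRadius ℝ (-(Q 0)) ∧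
      (1 : ℝ) ∉ spectrum ℝ (Q l) := by
  intro l hl
  -- positivity of the resolvent on the image of the positive cone
  have hVpos : ∀ (m : ℝ), 0 ≤ m → ∀ z : X, 0 ≤ z → 0 ≤ Rl m (j z) := by
    intro m hm z hz
    rw [RSR.laplace Tsg hω j hj Tm1 hTm1 Am1 hAm1 Rl hm (hRl m hm) z]
    apply RSR.integral_nonneg
    refine (ae_restrict_iff' measurableSet_Ioi).mpr (Eventually.of_forall fun t ht => ?_)
    exact RSR.smul_nonneg (Real.exp_pos _).le (hTpos t (le_of_lt ht) z hz)
  have hRlpos : ∀ (m : ℝ), 0 ≤ m → ∀ y : Xm1,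
      y ∈ closure (j '' {x : X | 0 ≤ x}) → 0 ≤ Rl m y := by
    intro m hm y hy
    have h1 : Rl m y ∈ closure ((Rl m) '' (j '' {x : X | 0 ≤ x})) := by
      apply image_closure_subset_closure_image (Rl m).continuous
      exact Set.mem_image_of_mem _ hy
    have h2 : closure ((Rl m) '' (j '' {x : X | 0 ≤ x})) ⊆ {x : X | 0 ≤ x} := by
      apply closure_minimal _ isClosed_nonneg
      rintro _ ⟨_, ⟨z, hz, rfl⟩, rfl⟩
      exact hVpos m hm z hz
    exact h2 h1
  have hRlB : ∀ (m : ℝ), 0 ≤ m → ∀ u : U, 0 ≤ u → 0 ≤ Rl m (B u) :=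
    fun m hm u hu => hRlpos m hm (B u) (hBpos u hu)
  -- resolvent identity linking `Rl 0` and `Rl l`
  have hresid : ∀ y : Xm1, Rl 0 y - Rl l y = l • Rl l (j (Rl 0 y)) := by
    intro y
    obtain ⟨h0, hres0⟩ := (hRl 0 le_rfl).1 y
    rw [zero_smul, zero_sub] at hres0
    have hA0 : Am1 ⟨(j.comp (Rl 0)) y, h0⟩ = -y := neg_eq_iff_eq_neg.mp hres0
    have happ := (hRl l hl.le).2 ⟨(j.comp (Rl 0)) y, h0⟩
    rw [hA0, sub_neg_eq_add] at happ
    have happ' : j ((Rl l) (l • (j ((Rl 0) y)) + y)) = j ((Rl 0) y) := happ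
    have h3 := hj happ'
    rw [map_add, _root_.map_smul] at h3
    exact (eq_sub_of_add_eq h3).symm
  -- positivity and domination of Q
  have hQl : ∀ u : U, 0 ≤ u → 0 ≤ Q l u ∧ Q l u ≤ Q 0 u := by
    intro u hu
    constructor
    · rw [hQ l u]; exact hCpos _ (hRlB l hl.le u hu)
    · have hdiff : Q 0 u - Q l u = C (l • Rl l (j (Rl 0 (B u)))) := by
        rw [hQ 0 u, hQ l u, ← map_sub, hresid (B u)]
      have hpos2 : (0:U) ≤ C (l • Rl l (j (Rl 0 (B u)))) := by
        apply hCpos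
        exact RSR.smul_nonneg hl.le (hVpos l hl.le _ (hRlB 0 le_rfl u hu))
      rw [← hdiff] at hpos2
      exact sub_nonneg.mp hpos2
  have hQ0 : ∀ u : U, 0 ≤ u → 0 ≤ Q 0 u := fun u hu => by
    rw [hQ 0 u]; exact hCpos _ (hRlB 0 le_rfl u hu)
  have hrQ0 : spectralRadius ℝ (Q 0) < 1 := by
    rw [← RSR.radius_neg (Q 0)]; exact hr
  have hfin : spectralRadius ℝ (Q 0) ≠ ⊤ := hrQ0.ne_top
  have hrad : spectralRadius ℝ (Q l) ≤ spectralRadius ℝ (-(Q 0)) := by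
    rw [RSR.radius_neg (Q 0)]
    exact RSR.radius_le_radius (fun u hu => (hQl u hu).1) hQ0 (fun u hu => (hQl u hu).2) hfin
  refine ⟨hQl, hrad, ?_⟩
  intro hmem
  have h1 : (1:ENNReal) ≤ spectralRadius ℝ (Q l) := by
    have h2 := le_iSup₂ (f := fun k (_ : k ∈ spectrum ℝ (Q l)) => (‖k‖₊ : ENNReal)) 1 hmem
    simpa [spectralRadius] using h2
  have h2 : spectralRadius ℝ (Q l) < 1 := lt_of_le_of_lt hrad hr
  exact absurd h1 (not_le.mpr h2)
end

section
/- Let A, Ã be generators with A_{BC} and A_{B̃C̃} their structured perturbations such that for some λ > 0 both 1 ∈ ρ(C R(λ,A_{−1})B) and 1 ∈ ρ(C̃ R(λ,A_{−1})B̃) hold, with resolvents given by R(λ, A_{BC}) = R(λ,A) + R(λ,A_{−1})B (Id − C R(λ,A_{−1})B)^{−1} C R(λ,A) and analogously for A_{B̃C̃}. If |C R(λ,A) x| ≤ C̃ R(λ,A)|x|, |R(λ,A_{−1}) B u| ≤ R(λ,A_{−1}) B̃ |u|, |C R(λ,A_{−1})B u| ≤ C̃ R(λ,A_{−1})B̃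 |u| for all x ∈ X, u ∈ U, and r(C̃ R(λ,A_{−1})B̃) < 1, then |R(λ, A_{BC}) x| ≤ R(λ, A_{B̃C̃}) x for all x ∈ X₊, and hence ‖R(λ,A_{BC})ⁿ‖ ≤ ‖R(λ,A_{B̃C̃})ⁿ‖ for all n ∈ ℕ. -/
set_option maxHeartbeats 2000000
set_option synthInstance.maxHeartbeats 1000000

open scoped ENNReal NNReal

section Aux

variable {U : Type*} [NormedAddCommGroup U] [Lattice U] [HasSolidNorm U] [IsOrderedAddMonoid U] [NormedSpace ℝ U] [CompleteSpace U]

lemma aux_pos_pow (T : U →L[ℝ] U) (hT : ∀ u : U, 0 ≤ u → 0 ≤ T u) :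
    ∀ n : ℕ, ∀ u : U, 0 ≤ u → 0 ≤ (T ^ n) u := by
  intro n
  induction n with
  | zero => intro u hu; simpa using hu
  | succ n ih =>
      intro u hu
      rw [pow_succ, ContinuousLinearMap.mul_apply]
      exact ih (T u) (hT u hu)

lemma aux_pos_tsum {f : ℕ → U →L[ℝ] U} (hf : Summable f)
    (h : ∀ n : ℕ, ∀ u : U, 0 ≤ u → 0 ≤ f n u) (u : U) (hu : 0 ≤ u) :
    0 ≤ (∑' n, f n) u := by
  have heval : (∑' n, f n) u = ∑' n, f n u := by
    have := (ContinuousLinearMap.apply ℝ U u).map_tsum hf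
    simpa using this
  rw [heval]
  exact tsum_nonneg fun n => h n u hu

lemma aux_mono {V W : Type*} [NormedAddCommGroup V] [Lattice V] [HasSolidNorm V] [IsOrderedAddMonoid V] [NormedSpace ℝ V]
    [NormedAddCommGroup W] [Lattice W] [HasSolidNorm W] [IsOrderedAddMonoid W] [NormedSpace ℝ W]
    {T : V →L[ℝ] W} (hT : ∀ u : V, 0 ≤ u → 0 ≤ T u) {a b : V} (hab : a ≤ b) :
    T a ≤ T b := by
  have h := hT (b - a) (by simpa using hab)
  rw [map_sub] at h
  exact sub_nonneg.mp h

/-- Scalar positivity in a normed lattice group with a real normed space structure: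
nonnegative real multiples of positive elements are positive.  Proved by dyadic
approximation, using that lattice ordered groups are semiclosed. -/
lemma aux_smul_nonneg {c : ℝ} (hc : 0 ≤ c) {v : U} (hv : 0 ≤ v) : 0 ≤ c • v := by
  have hsemi : ∀ (k : ℕ) (w : U), 0 ≤ (2 ^ k : ℕ) • w → 0 ≤ w := by
    intro k
    induction k with
    | zero => intro w h; simpa using h
    | succ k ih =>
        intro w h
        have h2 : (2 ^ (k + 1) : ℕ) • w = (2 ^ k : ℕ) • (2 • w) := by
          rw [← mul_nsmul]
          congr 1
          ring
        rw [h2] at h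
        exact nsmul_two_semiclosed (ih _ h)
  have hdy : ∀ m k : ℕ, 0 ≤ ((m : ℝ) / 2 ^ k) • v := by
    intro m k
    apply hsemi k
    have h2 : ((2 ^ k : ℕ) : ℝ) * ((m : ℝ) / 2 ^ k) = (m : ℝ) := by
      push_cast
      field_simp
    have h3 : (2 ^ k : ℕ) • (((m : ℝ) / 2 ^ k) • v) = (m : ℕ) • v := by
      calc (2 ^ k : ℕ) • (((m : ℝ) / 2 ^ k) • v)
          = ((2 ^ k : ℕ) : ℝ) • (((m : ℝ) / 2 ^ k) • v) :=
            (Nat.cast_smul_eq_nsmul ℝ _ _).symm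
        _ = (((2 ^ k : ℕ) : ℝ) * ((m : ℝ) / 2 ^ k)) • v := smul_smul _ _ _
        _ = (m : ℝ) • v := by rw [h2]
        _ = (m : ℕ) • v := Nat.cast_smul_eq_nsmul ℝ _ _
    rw [h3]
    exact nsmul_nonneg hv m
  have hlow : ∀ n : ℕ, c - 1 / 2 ^ n ≤ (⌊c * 2 ^ n⌋₊ : ℝ) / 2 ^ n := by
    intro n
    have hp : (0 : ℝ) < 2 ^ n := by positivity
    rw [le_div_iff₀ hp]
    have hfl : c * 2 ^ n < (⌊c * 2 ^ n⌋₊ : ℝ) + 1 := Nat.lt_floor_add_one _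
    have he : (c - 1 / 2 ^ n) * 2 ^ n = c * 2 ^ n - 1 := by field_simp
    linarith
  have hhigh : ∀ n : ℕ, (⌊c * 2 ^ n⌋₊ : ℝ) / 2 ^ n ≤ c := by
    intro n
    have hp : (0 : ℝ) < 2 ^ n := by positivity
    rw [div_le_iff₀ hp]
    exact Nat.floor_le (mul_nonneg hc hp.le)
  have hlim0 : Filter.Tendsto (fun n : ℕ => (1 : ℝ) / 2 ^ n) Filter.atTop (nhds 0) := by
    have h := tendsto_pow_atTop_nhds_zero_of_lt_one
      (by norm_num : (0 : ℝ) ≤ 1 / 2) (by norm_num : (1 : ℝ) / 2 < 1)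
    simpa [div_pow] using h
  have hlim : Filter.Tendsto (fun n : ℕ => c - 1 / 2 ^ n) Filter.atTop (nhds c) := by
    simpa using tendsto_const_nhds.sub hlim0
  have hseq : Filter.Tendsto (fun n : ℕ => (⌊c * 2 ^ n⌋₊ : ℝ) / 2 ^ n)
      Filter.atTop (nhds c) :=
    tendsto_of_tendsto_of_tendsto_of_le_of_le hlim tendsto_const_nhds hlow hhigh
  have hsm : Filter.Tendsto (fun n : ℕ => ((⌊c * 2 ^ n⌋₊ : ℝ) / 2 ^ n) • v)
      Filter.atTop (nhds (c • v)) := hseq.smul_const v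
  exact le_of_tendsto_of_tendsto tendsto_const_nhds hsm
    (Filter.Eventually.of_forall fun n => hdy _ n)

/-- The base point of the continuation: the resolvent at `s₀ = ‖Kt‖ + 1` is positive,
by the norm-convergent Neumann series. -/
lemma aux_base (Kt : U →L[ℝ] U) (hKtpos : ∀ u : U, 0 ≤ u → 0 ≤ Kt u) :
    ∀ u : U, 0 ≤ u → 0 ≤ Ring.inverse (algebraMap ℝ (U →L[ℝ] U) (‖Kt‖ + 1) - Kt) u := by
  set s₀ : ℝ := ‖Kt‖ + 1 with hs₀
  have hs₀pos : (0 : ℝ) < s₀ := by rw [hs₀]; positivity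
  set x₀ : U →L[ℝ] U := s₀⁻¹ • Kt with hx₀
  have hx₀norm : ‖x₀‖ < 1 := by
    have hns : ‖x₀‖ = ‖(s₀⁻¹ : ℝ)‖ * ‖Kt‖ := by rw [hx₀]; exact norm_smul (s₀⁻¹ : ℝ) Kt
    rw [hns, Real.norm_eq_abs, abs_of_pos (inv_pos.mpr hs₀pos)]
    have h : ‖Kt‖ < s₀ := by rw [hs₀]; linarith
    calc s₀⁻¹ * ‖Kt‖ < s₀⁻¹ * s₀ := mul_lt_mul_of_pos_left h (inv_pos.mpr hs₀pos)
      _ = 1 := inv_mul_cancel₀ (ne_of_gt hs₀pos)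
  set N₀ : U →L[ℝ] U := ∑' n : ℕ, x₀ ^ n with hN₀
  have h1 : (1 - x₀) * N₀ = 1 := mul_neg_geom_series x₀ hx₀norm
  have h2 : N₀ * (1 - x₀) = 1 := geom_series_mul_neg x₀ hx₀norm
  have hfac : algebraMap ℝ (U →L[ℝ] U) s₀ - Kt = s₀ • (1 - x₀) := by
    rw [hx₀, smul_sub, smul_smul, mul_inv_cancel₀ (ne_of_gt hs₀pos), one_smul,
      Algebra.algebraMap_eq_smul_one]
  have hA1 : (algebraMap ℝ (U →L[ℝ] U) s₀ - Kt) * (s₀⁻¹ • N₀) = 1 := by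
    rw [hfac, smul_mul_smul_comm, mul_inv_cancel₀ (ne_of_gt hs₀pos), h1, one_smul]
  have hA2 : (s₀⁻¹ • N₀) * (algebraMap ℝ (U →L[ℝ] U) s₀ - Kt) = 1 := by
    rw [hfac, smul_mul_smul_comm, inv_mul_cancel₀ (ne_of_gt hs₀pos), h2, one_smul]
  have hinv : Ring.inverse (algebraMap ℝ (U →L[ℝ] U) s₀ - Kt) = s₀⁻¹ • N₀ :=
    Ring.inverse_unit ⟨_, s₀⁻¹ • N₀, hA1, hA2⟩
  intro u hu
  rw [hinv, ContinuousLinearMap.smul_apply]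
  refine aux_smul_nonneg (inv_nonneg.mpr hs₀pos.le) ?_
  rw [hN₀]
  refine aux_pos_tsum (summable_geometric_of_norm_lt_one hx₀norm) ?_ u hu
  intro n v hv
  rw [hx₀, smul_pow, ContinuousLinearMap.smul_apply]
  exact aux_smul_nonneg (pow_nonneg (inv_nonneg.mpr hs₀pos.le) n) (aux_pos_pow Kt hKtpos n v hv)

/-- The continuation step: if the resolvent at `s` is positive and `t ≤ s` is close enough to
`s`, then the resolvent at `t` is positive, via the resolvent power series. -/
lemma aux_step (Kt : U →L[ℝ] U) (s t : ℝ) (hts : t ≤ s)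
    (hus : IsUnit (algebraMap ℝ (U →L[ℝ] U) s - Kt))
    (hsmall : (s - t) * ‖Ring.inverse (algebraMap ℝ (U →L[ℝ] U) s - Kt)‖ < 1)
    (hpos : ∀ u : U, 0 ≤ u → 0 ≤ Ring.inverse (algebraMap ℝ (U →L[ℝ] U) s - Kt) u) :
    ∀ u : U, 0 ≤ u → 0 ≤ Ring.inverse (algebraMap ℝ (U →L[ℝ] U) t - Kt) u := by
  set As : U →L[ℝ] U := algebraMap ℝ (U →L[ℝ] U) s - Kt with hAs
  set G : U →L[ℝ] U := Ring.inverse As with hG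
  have hga : As * G = 1 := by rw [hG]; exact Ring.mul_inverse_cancel _ hus
  have hag : G * As = 1 := by rw [hG]; exact Ring.inverse_mul_cancel _ hus
  set x : U →L[ℝ] U := (s - t) • G with hx
  have hxnorm : ‖x‖ < 1 := by
    have hns : ‖x‖ = ‖(s - t : ℝ)‖ * ‖G‖ := by rw [hx]; exact norm_smul (s - t) G
    rw [hns, Real.norm_eq_abs, abs_of_nonneg (sub_nonneg.mpr hts)]
    exact hsmall
  set N : U →L[ℝ] U := ∑' n : ℕ, x ^ n with hN
  have h1 : (1 - x) * N = 1 := mul_neg_geom_series x hxnorm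
  have h2 : N * (1 - x) = 1 := geom_series_mul_neg x hxnorm
  have hfac : algebraMap ℝ (U →L[ℝ] U) t - Kt = As * (1 - x) := by
    rw [mul_sub, mul_one, hx, mul_smul_comm, hga, hAs,
      Algebra.algebraMap_eq_smul_one, Algebra.algebraMap_eq_smul_one, sub_smul]
    abel
  have hu1 : (algebraMap ℝ (U →L[ℝ] U) t - Kt) * (N * G) = 1 := by
    rw [hfac, mul_assoc, ← mul_assoc (1 - x) N G, h1, one_mul, hga]
  have hu2 : (N * G) * (algebraMap ℝ (U →L[ℝ] U) t - Kt) = 1 := by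
    rw [hfac, mul_assoc, ← mul_assoc G As (1 - x), hag, one_mul, h2]
  have hinv : Ring.inverse (algebraMap ℝ (U →L[ℝ] U) t - Kt) = N * G :=
    Ring.inverse_unit ⟨_, N * G, hu1, hu2⟩
  intro u hu
  rw [hinv, ContinuousLinearMap.mul_apply, hN]
  refine aux_pos_tsum (summable_geometric_of_norm_lt_one hxnorm) ?_ (G u) (hpos u hu)
  intro n v hv
  rw [hx, smul_pow, ContinuousLinearMap.smul_apply]
  exact aux_smul_nonneg (pow_nonneg (sub_nonneg.mpr hts) n) (aux_pos_pow G hpos n v hv)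

/-- Positivity of `(1 - Kt)⁻¹` for a positive operator `Kt` with real spectral radius `< 1`,
by continuation of the resolvent from `‖Kt‖ + 1` down to `1`. -/
lemma aux_inverse_pos (Kt : U →L[ℝ] U) (hKtpos : ∀ u : U, 0 ≤ u → 0 ≤ Kt u)
    (hrKt : spectralRadius ℝ Kt < 1) :
    ∀ u : U, 0 ≤ u → 0 ≤ (Ring.inverse (1 - Kt)) u := by
  have hu : ∀ t : ℝ, 1 ≤ t → IsUnit (algebraMap ℝ (U →L[ℝ] U) t - Kt) := by
    intro t ht
    have hn : (1 : ℝ≥0) ≤ ‖t‖₊ := by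
      rw [← NNReal.coe_le_coe, coe_nnnorm, NNReal.coe_one, Real.norm_eq_abs]
      exact ht.trans (le_abs_self t)
    have hlt : spectralRadius ℝ Kt < (‖t‖₊ : ℝ≥0∞) :=
      lt_of_lt_of_le hrKt (by exact_mod_cast hn)
    exact spectrum.mem_resolventSet_of_spectralRadius_lt hlt
  set s₀ : ℝ := ‖Kt‖ + 1 with hs₀
  have h1s₀ : (1 : ℝ) ≤ s₀ := by rw [hs₀]; linarith [norm_nonneg Kt]
  have hcont : ContinuousOn
      (fun t : ℝ => Ring.inverse (algebraMap ℝ (U →L[ℝ] U) t - Kt)) (Set.Icc 1 s₀) := by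
    intro t ht
    apply ContinuousAt.continuousWithinAt
    have hc1 : ContinuousAt (fun t : ℝ => algebraMap ℝ (U →L[ℝ] U) t - Kt) t :=
      ((continuous_algebraMap ℝ (U →L[ℝ] U)).sub continuous_const).continuousAt
    have hc2 : ContinuousAt Ring.inverse (algebraMap ℝ (U →L[ℝ] U) t - Kt) := by
      have h := NormedRing.inverse_continuousAt (hu t ht.1).unit
      rwa [IsUnit.unit_spec] at h
    exact ContinuousAt.comp (g := Ring.inverse)
      (f := fun t : ℝ => algebraMap ℝ (U →L[ℝ] U) t - Kt) (x := t) hc2 hc1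
  obtain ⟨M, hM⟩ := isCompact_Icc.exists_bound_of_continuousOn hcont
  have hMp : (0 : ℝ) ≤ max M 0 := le_max_right _ _
  set δ : ℝ := (max M 0 + 1)⁻¹ with hδdef
  have hδpos : 0 < δ := by rw [hδdef]; exact inv_pos.mpr (by linarith)
  have hδlt : ∀ s ∈ Set.Icc (1 : ℝ) s₀,
      δ * ‖Ring.inverse (algebraMap ℝ (U →L[ℝ] U) s - Kt)‖ < 1 := by
    intro s hs
    have hb : ‖Ring.inverse (algebraMap ℝ (U →L[ℝ] U) s - Kt)‖ ≤ max M 0 :=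
      le_trans (hM s hs) (le_max_left _ _)
    have h2 : δ * max M 0 < 1 := by
      have he : δ * max M 0 = max M 0 / (max M 0 + 1) := by
        rw [hδdef, div_eq_mul_inv, mul_comm]
      rw [he, div_lt_one (by linarith)]
      linarith
    calc δ * ‖Ring.inverse (algebraMap ℝ (U →L[ℝ] U) s - Kt)‖ ≤ δ * max M 0 :=
          mul_le_mul_of_nonneg_left hb hδpos.le
      _ < 1 := h2
  have hbase := aux_base Kt hKtpos
  have ind : ∀ n : ℕ, ∀ t : ℝ, 1 ≤ t → s₀ - n * δ ≤ t → t ≤ s₀ →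
      ∀ u : U, 0 ≤ u → 0 ≤ Ring.inverse (algebraMap ℝ (U →L[ℝ] U) t - Kt) u := by
    intro n
    induction n with
    | zero =>
        intro t _ hlo hhi u hu0
        have ht : t = s₀ := le_antisymm hhi (by simpa using hlo)
        rw [ht, hs₀]
        exact hbase u hu0
    | succ n ih =>
        intro t h1t hlo hhi
        have hnd : (0 : ℝ) ≤ (n : ℝ) * δ := mul_nonneg (Nat.cast_nonneg n) hδpos.le
        have hlo' : s₀ - ((n : ℝ) * δ + δ) ≤ t := by push_cast at hlo; linarith
        set s : ℝ := min s₀ (t + δ) with hsdef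
        have hts : t ≤ s := le_min hhi (by linarith)
        have h1s : 1 ≤ s := le_trans h1t hts
        have hss₀ : s ≤ s₀ := min_le_left _ _
        have hslo : s₀ - (n : ℝ) * δ ≤ s := by
          rcases le_total s₀ (t + δ) with h | h
          · rw [hsdef, min_eq_left h]; linarith
          · rw [hsdef, min_eq_right h]; linarith
        have hst : s - t ≤ δ := by
          have h := min_le_right s₀ (t + δ)
          rw [hsdef]; linarith
        have hpos_s := ih s h1s hslo hss₀
        have hsmall : (s - t) * ‖Ring.inverse (algebraMap ℝ (U →L[ℝ] U) s - Kt)‖ < 1 :=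
          lt_of_le_of_lt (mul_le_mul_of_nonneg_right hst (norm_nonneg _))
            (hδlt s ⟨h1s, hss₀⟩)
        exact aux_step Kt s t hts (hu s h1s) hsmall hpos_s
  obtain ⟨n, hn⟩ := exists_nat_ge ((s₀ - 1) / δ)
  have hlo : s₀ - (n : ℝ) * δ ≤ 1 := by
    have h := (div_le_iff₀ hδpos).mp hn
    linarith
  have hres := ind n 1 le_rfl hlo h1s₀
  intro u hu0
  have h := hres u hu0
  rwa [map_one] at h

/-- Domination of the inverse: if `|K u| ≤ Kt |u|` and `(1 - Kt)⁻¹` is positive, then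
`|(1 - K)⁻¹ v| ≤ (1 - Kt)⁻¹ |v|`. -/
lemma aux_dom (K Kt : U →L[ℝ] U)
    (hK : ∀ u : U, |K u| ≤ Kt |u|)
    (hKu : IsUnit (1 - K)) (hKtu : IsUnit (1 - Kt))
    (hTpos : ∀ u : U, 0 ≤ u → 0 ≤ Ring.inverse (1 - Kt) u) (v : U) :
    |Ring.inverse (1 - K) v| ≤ Ring.inverse (1 - Kt) |v| := by
  set S : U →L[ℝ] U := Ring.inverse (1 - K) with hSdef
  set T : U →L[ℝ] U := Ring.inverse (1 - Kt) with hTdef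
  have hmulS : (1 - K) * S = 1 := by rw [hSdef]; exact Ring.mul_inverse_cancel _ hKu
  have hmulT : T * (1 - Kt) = 1 := by rw [hTdef]; exact Ring.inverse_mul_cancel _ hKtu
  have hSv : S v - K (S v) = v := by
    have h : ((1 - K) * S) v = (1 : U →L[ℝ] U) v := by rw [hmulS]
    simpa [ContinuousLinearMap.mul_apply, ContinuousLinearMap.sub_apply,
      ContinuousLinearMap.one_apply] using h
  have h1 : |S v| ≤ |v| + Kt |S v| := by
    have hv : S v = v + K (S v) := eq_add_of_sub_eq hSv
    calc |S v| = |v + K (S v)| := by rw [← hv]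
      _ ≤ |v| + |K (S v)| := abs_add_le _ _
      _ ≤ |v| + Kt |S v| := add_le_add_right (hK (S v)) _
  have h2 : |S v| - Kt |S v| ≤ |v| := by
    rw [sub_le_iff_le_add]
    exact h1
  have h3 : T (|S v| - Kt |S v|) ≤ T |v| := aux_mono hTpos h2
  have h4 : T (|S v| - Kt |S v|) = |S v| := by
    have h : (T * (1 - Kt)) |S v| = (1 : U →L[ℝ] U) |S v| := by rw [hmulT]
    simpa [ContinuousLinearMap.mul_apply, ContinuousLinearMap.sub_apply,
      ContinuousLinearMap.one_apply] using h
  calc |S v| = T (|S v| - Kt |S v|) := h4.symm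
    _ ≤ T |v| := h3

end Aux

/-- Domination of the resolvents of structured perturbations.  For a fixed
`λ` let `RA = R(λ,A)`, `P = R(λ,A₋₁)B`, `Cr = C R(λ,A)`, `K = C R(λ,A₋₁)B`
and analogously `Pt, Ctr, Kt` for the dominating operators `B̃, C̃`.  If
`1 ∈ ρ(K) ∩ ρ(Kt)`, the dominations `|Cr x| ≤ Ctr |x|`, `|P u| ≤ Pt |u|`,
`|K u| ≤ Kt |u|` hold, `RA, Pt, Ctr, Kt` are positive and `r(Kt) < 1`, then
the resolvents `R(λ,A_{BC}) = RA + P (1−K)⁻¹ Cr` and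
`R(λ,A_{B̃C̃}) = RA + Pt (1−Kt)⁻¹ Ctr` satisfy
`|R(λ,A_{BC}) x| ≤ R(λ,A_{B̃C̃}) x` for `x ≥ 0`, and hence
`‖R(λ,A_{BC})ⁿ‖ ≤ ‖R(λ,A_{B̃C̃})ⁿ‖` for all `n`. -/
theorem dominated_resolvent_of_perturbed_operators
    {X U : Type*}
    [NormedAddCommGroup X] [Lattice X] [HasSolidNorm X] [IsOrderedAddMonoid X] [NormedSpace ℝ X] [CompleteSpace X]
    [NormedAddCommGroup U] [Lattice U] [HasSolidNorm U] [IsOrderedAddMonoid U] [NormedSpace ℝ U] [CompleteSpace U]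
    (RA : X →L[ℝ] X) (hRA : ∀ x : X, 0 ≤ x → 0 ≤ RA x)
    (P Pt : U →L[ℝ] X)
    (hPtpos : ∀ u : U, 0 ≤ u → 0 ≤ Pt u)
    (hP : ∀ u : U, |P u| ≤ Pt |u|)
    (Cr Ctr : X →L[ℝ] U)
    (hCtrpos : ∀ x : X, 0 ≤ x → 0 ≤ Ctr x)
    (hCr : ∀ x : X, |Cr x| ≤ Ctr |x|)
    (K Kt : U →L[ℝ] U)
    (hKtpos : ∀ u : U, 0 ≤ u → 0 ≤ Kt u)
    (hK : ∀ u : U, |K u| ≤ Kt |u|)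
    (h1K : (1 : ℝ) ∉ spectrum ℝ K) (h1Kt : (1 : ℝ) ∉ spectrum ℝ Kt)
    (hrKt : spectralRadius ℝ Kt < 1) :
    (∀ x : X, 0 ≤ x →
      |(RA + P.comp ((Ring.inverse (1 - K)).comp Cr)) x| ≤
        (RA + Pt.comp ((Ring.inverse (1 - Kt)).comp Ctr)) x) ∧
    ∀ n : ℕ, ‖(RA + P.comp ((Ring.inverse (1 - K)).comp Cr)) ^ n‖ ≤
        ‖(RA + Pt.comp ((Ring.inverse (1 - Kt)).comp Ctr)) ^ n‖ := by
  have hKu : IsUnit (1 - K) := by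
    have h := spectrum.notMem_iff.mp h1K
    rwa [map_one] at h
  have hKtu : IsUnit (1 - Kt) := by
    have h := spectrum.notMem_iff.mp h1Kt
    rwa [map_one] at h
  have hTpos := aux_inverse_pos Kt hKtpos hrKt
  have hdom := aux_dom K Kt hK hKu hKtu hTpos
  set S : U →L[ℝ] U := Ring.inverse (1 - K) with hSdef
  set T : U →L[ℝ] U := Ring.inverse (1 - Kt) with hTdef
  set D : X →L[ℝ] X := RA + P.comp (S.comp Cr) with hDdef
  set E : X →L[ℝ] X := RA + Pt.comp (T.comp Ctr) with hEdef
  have hDx : ∀ x : X, D x = RA x + P (S (Cr x)) := by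
    intro x
    simp [hDdef, ContinuousLinearMap.add_apply, ContinuousLinearMap.comp_apply]
  have hEx : ∀ x : X, E x = RA x + Pt (T (Ctr x)) := by
    intro x
    simp [hEdef, ContinuousLinearMap.add_apply, ContinuousLinearMap.comp_apply]
  have part1 : ∀ x : X, 0 ≤ x → |D x| ≤ E x := by
    intro x hx
    rw [hDx x, hEx x]
    calc |RA x + P (S (Cr x))| ≤ |RA x| + |P (S (Cr x))| := abs_add_le _ _
      _ = RA x + |P (S (Cr x))| := by rw [abs_of_nonneg (hRA x hx)]
      _ ≤ RA x + Pt |S (Cr x)| := add_le_add_right (hP _) _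
      _ ≤ RA x + Pt (T |Cr x|) := add_le_add_right (aux_mono (T := Pt) hPtpos (hdom (Cr x))) (RA x)
      _ ≤ RA x + Pt (T (Ctr |x|)) :=
          add_le_add_right (aux_mono (T := Pt) hPtpos (aux_mono (T := T) hTpos (hCr x))) (RA x)
      _ = RA x + Pt (T (Ctr x)) := by rw [abs_of_nonneg hx]
  refine ⟨part1, ?_⟩
  have hEpos : ∀ x : X, 0 ≤ x → 0 ≤ E x := by
    intro x hx
    rw [hEx x]
    exact add_nonneg (hRA x hx) (hPtpos _ (hTpos _ (hCtrpos x hx)))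
  have hdomE : ∀ x : X, |D x| ≤ E |x| := by
    intro x
    have hxd : D x = D x⁺ - D x⁻ := by rw [← map_sub, posPart_sub_negPart]
    calc |D x| = |D x⁺ - D x⁻| := by rw [← hxd]
      _ ≤ |D x⁺| + |D x⁻| := by
          rw [sub_eq_add_neg]
          simpa [abs_neg] using abs_add_le (D x⁺) (-(D x⁻))
      _ ≤ E x⁺ + E x⁻ := add_le_add (part1 _ (posPart_nonneg x)) (part1 _ (negPart_nonneg x))
      _ = E (x⁺ + x⁻) := (map_add E _ _).symm
      _ = E |x| := by rw [posPart_add_negPart]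
  have hpow : ∀ n : ℕ, ∀ x : X, |(D ^ n) x| ≤ (E ^ n) |x| := by
    intro n
    induction n with
    | zero => intro x; simp
    | succ n ih =>
        intro x
        rw [pow_succ, pow_succ, ContinuousLinearMap.mul_apply,
          ContinuousLinearMap.mul_apply]
        calc |(D ^ n) (D x)| ≤ (E ^ n) |D x| := ih (D x)
          _ ≤ (E ^ n) (E |x|) := aux_mono (aux_pos_pow E hEpos n) (hdomE x)
  intro n
  refine ContinuousLinearMap.opNorm_le_bound _ (norm_nonneg (E ^ n)) fun x => ?_
  have h1 : ‖(D ^ n) x‖ ≤ ‖(E ^ n) |x|‖ := by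
    apply norm_le_norm_of_abs_le_abs
    rw [abs_of_nonneg (aux_pos_pow E hEpos n |x| (abs_nonneg x))]
    exact hpow n x
  calc ‖(D ^ n) x‖ ≤ ‖(E ^ n) |x|‖ := h1
    _ ≤ ‖E ^ n‖ * ‖|x|‖ := ContinuousLinearMap.le_opNorm _ _
    _ = ‖E ^ n‖ * ‖x‖ := by rw [norm_abs_eq_norm]
end

section
/- Let (T̃(t)) be a C₀-semigroup with generator Ã on a Banach space X̃, and let X be a Banach space with X̃₁ ↪ X ↪ X̃ continuously, T̃(t)X ⊆ X for all t, and (T(t)) := (T̃(t)|_X) a C₀-semigroup on X with generator A. Then X̃ embeds continuously into the extrapolation space X_{−1} of A, and for all λ ∈ ρ(A) = ρ(Ã) the extrapolated resolvent satisfies R(λ, A_{−1})|_{X̃} = R(λ, Ã), the extrapolated semigroup satisfies T_{−1}(t)|_{X̃} = T̃(t) for all t ≥ 0, and A_{−1}|_{X̃} = Ã. -/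
open Filter Topology Set MeasureTheory

/-- The semigroup maps the generator's domain into itself and commutes with the generator. -/
theorem sg_dom_comm {X : Type*} [NormedAddCommGroup X] [NormedSpace ℝ X]
    (T : C0Semigroup X) (A : X →ₗ.[ℝ] X) (hA : T.IsGenerator A)
    (t : ℝ) (ht : 0 ≤ t) (x : A.domain) :
    ∃ h : T.toFun t (x : X) ∈ A.domain, A ⟨T.toFun t (x : X), h⟩ = T.toFun t (A x) := by
  have key : Tendsto (fun s : ℝ => s⁻¹ • (T.toFun s (T.toFun t (x : X)) - T.toFun t (x : X)))
      (𝓝[>] 0) (𝓝 (T.toFun t (A x))) := by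
    have h1 : Tendsto (fun s : ℝ => T.toFun t (s⁻¹ • (T.toFun s (x : X) - (x : X))))
        (𝓝[>] 0) (𝓝 (T.toFun t (A x))) :=
      ((T.toFun t).continuous.tendsto _).comp (hA.2 x)
    refine h1.congr' ?_
    filter_upwards [self_mem_nhdsWithin] with s hs
    have hs' : (0:ℝ) ≤ s := le_of_lt hs
    have hcomm : T.toFun s (T.toFun t (x : X)) = T.toFun t (T.toFun s (x : X)) := by
      have e1 := T.map_add' s t hs' ht
      have e2 := T.map_add' t s ht hs'
      calc T.toFun s (T.toFun t (x : X)) = T.toFun (s + t) (x : X) := by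
            rw [e1]; rfl
        _ = T.toFun (t + s) (x : X) := by rw [add_comm]
        _ = T.toFun t (T.toFun s (x : X)) := by rw [e2]; rfl
    rw [_root_.map_smul, map_sub, hcomm]
  have hdom : T.toFun t (x : X) ∈ A.domain := (hA.1 _).2 ⟨_, key⟩
  exact ⟨hdom, tendsto_nhds_unique (hA.2 ⟨_, hdom⟩) key⟩

/-- The semigroup commutes with the resolvent of its generator. -/
theorem res_comm {X : Type*} [NormedAddCommGroup X] [NormedSpace ℝ X]
    (T : C0Semigroup X) (A : X →ₗ.[ℝ] X) (hA : T.IsGenerator A)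
    (l0 : ℝ) (R : X →L[ℝ] X) (hR : IsResolventAt A l0 R)
    (t : ℝ) (ht : 0 ≤ t) (x : X) :
    T.toFun t (R x) = R (T.toFun t x) := by
  obtain ⟨h1, h2⟩ := hR.1 x
  obtain ⟨hd, hc⟩ := sg_dom_comm T A hA t ht ⟨R x, h1⟩
  have h3 := hR.2 ⟨T.toFun t (R x), hd⟩
  have h4 : l0 • T.toFun t (R x) - A ⟨T.toFun t (R x), hd⟩ = T.toFun t x := by
    rw [hc]
    rw [← _root_.map_smul, ← map_sub, h2]
  rw [h4] at h3
  exact h3.symm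

/-- (Subspace semigroups and extrapolation) Let `(T̃(t))` be a `C₀`-semigroup
with generator `Ã` on `X̃`, and `X` a Banach space with `X̃₁ ↪ X ↪ X̃`
continuously, `T̃(t) X ⊆ X`, and `(T(t)) = (T̃(t)|_X)` a `C₀`-semigroup on `X`
with generator `A`.  Then `X̃` embeds continuously into the extrapolation
space `X₋₁` of `A` via some `k` with `k|_X = j`, and the extrapolated
resolvent, semigroup and generator restrict on `X̃` to `R(λ,Ã)`, `T̃(t)`
and `Ã` respectively. -/
theorem subspace_semigroup_extrapolation
    {Xt X Xm1 : Type*}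
    [NormedAddCommGroup Xt] [NormedSpace ℝ Xt] [CompleteSpace Xt]
    [NormedAddCommGroup X] [NormedSpace ℝ X] [CompleteSpace X]
    [NormedAddCommGroup Xm1] [NormedSpace ℝ Xm1] [CompleteSpace Xm1]
    (Ttsg : C0Semigroup Xt) (At : Xt →ₗ.[ℝ] Xt) (hAt : Ttsg.IsGenerator At)
    -- `X ↪ X̃` continuously
    (e : X →L[ℝ] Xt) (he : Function.Injective e)
    -- `X̃₁ = (D(Ã), ‖·‖_Ã) ↪ X` continuously
    (i : At.domain →ₗ[ℝ] X) (hei : ∀ x : At.domain, e (i x) = (x : Xt))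
    (hicont : ∃ c : ℝ, ∀ x : At.domain, ‖i x‖ ≤ c * (‖(x : Xt)‖ + ‖At x‖))
    -- the restricted semigroup on `X` and its generator
    (Tsg : C0Semigroup X)
    (hrest : ∀ t : ℝ, 0 ≤ t → ∀ x : X, e (Tsg.toFun t x) = Ttsg.toFun t (e x))
    (A : X →ₗ.[ℝ] X) (hA : Tsg.IsGenerator A)
    -- extrapolation data of `A`: `X₋₁`, extended semigroup and generator
    (j : X →L[ℝ] Xm1) (hj : Function.Injective j) (hjd : DenseRange j)
    (Tm1 : C0Semigroup Xm1)
    (hTm1 : ∀ s : ℝ, 0 ≤ s → ∀ x : X, Tm1.toFun s (j x) = j (Tsg.toFun s x))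
    (Am1 : Xm1 →ₗ.[ℝ] Xm1) (hAm1 : Tm1.IsGenerator Am1)
    (hXdom : ∀ x : X, j x ∈ Am1.domain)
    -- a point `λ0 ∈ ρ(A) = ρ(Ã)` with the resolvents of `Ã` and of `A₋₁`
    (l0 : ℝ) (Rt : Xt →L[ℝ] Xt) (hRt : IsResolventAt At l0 Rt)
    (Rm1 : Xm1 →L[ℝ] X) (hRm1 : IsResolventAt Am1 l0 (j.comp Rm1)) :
    ∃ k : Xt →L[ℝ] Xm1, Function.Injective k ∧
      (∀ x : X, k (e x) = j x) ∧
      (∀ y : Xt, e (Rm1 (k y)) = Rt y) ∧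
      (∀ t : ℝ, 0 ≤ t → ∀ y : Xt, Tm1.toFun t (k y) = k (Ttsg.toFun t y)) ∧
      (∀ x : At.domain, ∀ h : k (x : Xt) ∈ Am1.domain,
        Am1 ⟨k (x : Xt), h⟩ = k (At x)) := by
    classical
  -- the resolvent of Ã maps into its domain
  have hdRt : ∀ y : Xt, Rt y ∈ At.domain := fun y => (hRt.1 y).choose
  have hAtRt : ∀ y : Xt, ∀ h : Rt y ∈ At.domain, At ⟨Rt y, h⟩ = l0 • Rt y - y := by
    intro y h
    obtain ⟨h', hv⟩ := hRt.1 y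
    have he' : At ⟨Rt y, h⟩ = At ⟨Rt y, h'⟩ := rfl
    rw [he', sub_eq_iff_eq_add.mp hv]
    abel
  -- the map g = i ∘ R(l0, Ã) : X̃ → X, continuous
  obtain ⟨c, hc⟩ := hicont
  let gL : Xt →ₗ[ℝ] X :=
    i.comp (LinearMap.codRestrict At.domain (Rt : Xt →ₗ[ℝ] Xt) hdRt)
  have hgLdef : ∀ y : Xt, gL y = i ⟨Rt y, hdRt y⟩ := fun _ => rfl
  have hgbound : ∀ y : Xt, ‖gL y‖ ≤ (max c 0 * ((1 + |l0|) * ‖Rt‖ + 1)) * ‖y‖ := by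
    intro y
    have h1 : ‖gL y‖ ≤ c * (‖Rt y‖ + ‖At ⟨Rt y, hdRt y⟩‖) := hc _
    have h2 : ‖At ⟨Rt y, hdRt y⟩‖ = ‖l0 • Rt y - y‖ := by rw [hAtRt y (hdRt y)]
    have h3 : ‖l0 • Rt y - y‖ ≤ |l0| * (‖Rt‖ * ‖y‖) + ‖y‖ := by
      calc ‖l0 • Rt y - y‖ ≤ ‖l0 • Rt y‖ + ‖y‖ := norm_sub_le _ _
        _ ≤ |l0| * (‖Rt‖ * ‖y‖) + ‖y‖ := by
            rw [norm_smul, Real.norm_eq_abs]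
            gcongr
            exact Rt.le_opNorm y
    have h4 : ‖Rt y‖ ≤ ‖Rt‖ * ‖y‖ := Rt.le_opNorm y
    have h5 : c ≤ max c 0 := le_max_left _ _
    have h6 : (0:ℝ) ≤ max c 0 := le_max_right _ _
    calc ‖gL y‖ ≤ c * (‖Rt y‖ + ‖At ⟨Rt y, hdRt y⟩‖) := h1
      _ ≤ max c 0 * (‖Rt y‖ + ‖At ⟨Rt y, hdRt y⟩‖) := by
          apply mul_le_mul_of_nonneg_right h5
          positivity
      _ = max c 0 * (‖Rt y‖ + ‖l0 • Rt y - y‖) := by rw [h2]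
      _ ≤ max c 0 * (‖Rt‖ * ‖y‖ + (|l0| * (‖Rt‖ * ‖y‖) + ‖y‖)) := by
          apply mul_le_mul_of_nonneg_left _ h6
          gcongr
      _ = (max c 0 * ((1 + |l0|) * ‖Rt‖ + 1)) * ‖y‖ := by ring
  let g : Xt →L[ℝ] X := gL.mkContinuous _ hgbound
  have heg : ∀ y : Xt, e (g y) = Rt y := fun y => hei ⟨Rt y, hdRt y⟩
  -- the candidate k as a linear map
  let σ : Xt →ₗ[ℝ] Am1.domain :=
    LinearMap.codRestrict Am1.domain ((j.comp g) : Xt →ₗ[ℝ] Xm1)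
      (fun y => hXdom (g y))
  let kL : Xt →ₗ[ℝ] Xm1 := l0 • ((j.comp g) : Xt →ₗ[ℝ] Xm1) - Am1.toFun.comp σ
  have hkLdef : ∀ y : Xt, kL y = l0 • j (g y) - Am1 ⟨j (g y), hXdom (g y)⟩ :=
    fun _ => rfl
  -- characterization of kL via the resolvent of Am1
  have key : ∀ (y : Xt) (z : Xm1), kL y = z ↔ j (Rm1 z) = j (g y) := by
    intro y z
    constructor
    · rintro rfl
      exact hRm1.2 ⟨j (g y), hXdom (g y)⟩
    · intro h
      obtain ⟨hd, hv⟩ := hRm1.1 z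
      have hjz : (j.comp Rm1) z = j (g y) := h
      have hs : (⟨(j.comp Rm1) z, hd⟩ : Am1.domain) = ⟨j (g y), hXdom (g y)⟩ :=
        Subtype.ext hjz
      rw [hs, hjz] at hv
      exact hv
  have hjRinj : ∀ z w : Xm1, j (Rm1 z) = j (Rm1 w) → z = w := by
    intro z w h
    obtain ⟨hdz, hvz⟩ := hRm1.1 z
    obtain ⟨hdw, hvw⟩ := hRm1.1 w
    have h' : (j.comp Rm1) z = (j.comp Rm1) w := h
    have hs : (⟨(j.comp Rm1) z, hdz⟩ : Am1.domain) = ⟨(j.comp Rm1) w, hdw⟩ :=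
      Subtype.ext h'
    rw [← hvz, ← hvw, hs, h']
  -- resolvent compatibility: R(l0, A₋₁)|_X = R(l0, A) = R(l0, Ã)|_X
  have RC : ∀ q : X, Rt (e q) = e (Rm1 (j q)) := by
    intro q
    have hcomm : ∀ t : ℝ, 0 ≤ t →
        Tsg.toFun t (Rm1 (j q)) = Rm1 (Tm1.toFun t (j q)) := by
      intro t ht
      apply hj
      have h1 : Tm1.toFun t ((j.comp Rm1) (j q)) = (j.comp Rm1) (Tm1.toFun t (j q)) :=
        res_comm Tm1 Am1 hAm1 l0 _ hRm1 t ht (j q)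
      calc j (Tsg.toFun t (Rm1 (j q))) = Tm1.toFun t (j (Rm1 (j q))) :=
            (hTm1 t ht _).symm
        _ = (j.comp Rm1) (Tm1.toFun t (j q)) := h1
        _ = j (Rm1 (Tm1.toFun t (j q))) := rfl
    have hdq : Tendsto (fun t : ℝ => t⁻¹ • (Tsg.toFun t (Rm1 (j q)) - Rm1 (j q)))
        (𝓝[>] 0) (𝓝 (Rm1 (Am1 ⟨j q, hXdom q⟩))) := by
      have h2 : Tendsto (fun t : ℝ => Rm1 (t⁻¹ • (Tm1.toFun t (j q) - j q))) (𝓝[>] 0)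
          (𝓝 (Rm1 (Am1 ⟨j q, hXdom q⟩))) :=
        (Rm1.continuous.tendsto _).comp (hAm1.2 ⟨j q, hXdom q⟩)
      refine h2.congr' ?_
      filter_upwards [self_mem_nhdsWithin] with t ht
      rw [_root_.map_smul, map_sub, ← hcomm t (le_of_lt ht)]
    have hud : Rm1 (j q) ∈ A.domain := (hA.1 _).2 ⟨_, hdq⟩
    have hAu : A ⟨Rm1 (j q), hud⟩ = Rm1 (Am1 ⟨j q, hXdom q⟩) :=
      tendsto_nhds_unique (hA.2 ⟨_, hud⟩) hdq
    have hid : Rm1 (Am1 ⟨j q, hXdom q⟩) = l0 • Rm1 (j q) - q := by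
      have h3 := hRm1.2 ⟨j q, hXdom q⟩
      have h4 : Rm1 (l0 • j q - Am1 ⟨j q, hXdom q⟩) = q := hj h3
      rw [map_sub, _root_.map_smul] at h4
      rw [sub_eq_iff_eq_add] at h4
      rw [h4]
      abel
    have hAu2 : A ⟨Rm1 (j q), hud⟩ = l0 • Rm1 (j q) - q := hAu.trans hid
    have hedq : Tendsto (fun t : ℝ => t⁻¹ • (Ttsg.toFun t (e (Rm1 (j q))) - e (Rm1 (j q))))
        (𝓝[>] 0) (𝓝 (e (l0 • Rm1 (j q) - q))) := by
      have h4 : Tendsto (fun t : ℝ => e (t⁻¹ • (Tsg.toFun t (Rm1 (j q)) - Rm1 (j q))))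
          (𝓝[>] 0) (𝓝 (e (A ⟨Rm1 (j q), hud⟩))) :=
        (e.continuous.tendsto _).comp (hA.2 ⟨_, hud⟩)
      rw [hAu2] at h4
      refine h4.congr' ?_
      filter_upwards [self_mem_nhdsWithin] with t ht
      rw [_root_.map_smul, map_sub, hrest t (le_of_lt ht)]
    have heud : e (Rm1 (j q)) ∈ At.domain := (hAt.1 _).2 ⟨_, hedq⟩
    have hAteu : At ⟨e (Rm1 (j q)), heud⟩ = e (l0 • Rm1 (j q) - q) :=
      tendsto_nhds_unique (hAt.2 ⟨_, heud⟩) hedq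
    have h5 := hRt.2 ⟨e (Rm1 (j q)), heud⟩
    rw [hAteu] at h5
    have h6 : l0 • e (Rm1 (j q)) - e (l0 • Rm1 (j q) - q) = e q := by
      rw [map_sub, _root_.map_smul]; abel
    rw [show ((⟨e (Rm1 (j q)), heud⟩ : At.domain) : Xt) = e (Rm1 (j q)) from rfl, h6] at h5
    exact h5
  -- continuity of kL via the closed graph theorem
  have hgraph : IsClosed (kL.graph : Set (Xt × Xm1)) := by
    have hset : (kL.graph : Set (Xt × Xm1)) = {p : Xt × Xm1 | j (Rm1 p.2) = j (g p.1)} := by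
      ext p
      rw [SetLike.mem_coe, LinearMap.mem_graph_iff]
      constructor
      · intro h
        exact (key p.1 p.2).1 h.symm
      · intro h
        exact ((key p.1 p.2).2 h).symm
    rw [hset]
    exact isClosed_eq (by fun_prop) (by fun_prop)
  have hkcont : Continuous kL := kL.continuous_of_isClosed_graph hgraph
  refine ⟨⟨kL, hkcont⟩, ?_, ?_, ?_, ?_, ?_⟩
  · -- injectivity
    intro a b hab
    have hab' : kL a = kL b := hab
    have h0 : kL (a - b) = 0 := by rw [map_sub, hab', sub_self]
    have h1 : j (Rm1 0) = j (g (a - b)) := (key _ _).1 h0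
    have h2 : g (a - b) = 0 := by
      apply hj
      rw [map_zero]
      simpa using h1.symm
    have h3 : Rt (a - b) = 0 := by rw [← heg, h2, map_zero]
    obtain ⟨h', hv⟩ := hRt.1 (a - b)
    have h4 : (⟨Rt (a - b), h'⟩ : At.domain) = 0 := Subtype.ext (by simp [h3])
    rw [h4, LinearPMap.map_zero, h3] at hv
    have h5 : a - b = 0 := by rw [← hv]; simp
    exact sub_eq_zero.mp h5
  · -- k ∘ e = j
    intro x
    show kL (e x) = j x
    refine (key _ _).2 ?_
    have h1 : e (Rm1 (j x)) = e (g (e x)) := by rw [← RC x, heg]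
    rw [he h1]
  · -- e (Rm1 (k y)) = Rt y
    intro y
    show e (Rm1 (kL y)) = Rt y
    have h1 : j (Rm1 (kL y)) = j (g y) := (key _ _).1 rfl
    rw [hj h1]
    exact heg y
  · -- intertwining with the semigroups
    intro t ht y
    show Tm1.toFun t (kL y) = kL (Ttsg.toFun t y)
    refine ((key _ _).2 ?_).symm
    have h1 : j (Rm1 (Tm1.toFun t (kL y))) = Tm1.toFun t (j (Rm1 (kL y))) :=
      (res_comm Tm1 Am1 hAm1 l0 _ hRm1 t ht (kL y)).symm
    have h2 : j (Rm1 (kL y)) = j (g y) := (key _ _).1 rfl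
    have h3 : Tsg.toFun t (g y) = g (Ttsg.toFun t y) := by
      apply he
      rw [hrest t ht, heg, heg, res_comm Ttsg At hAt l0 Rt hRt t ht y]
    rw [h1, h2, hTm1 t ht, h3]
  · -- the generator restricts to Ã
    intro x h
    show Am1 ⟨kL (x : Xt), h⟩ = kL ((At x : Xt))
    -- the key identity Am1 (j (g x)) = j (g (At x))
    have KL : Am1 ⟨j (g (x : Xt)), hXdom (g (x : Xt))⟩ = j (g ((At x : Xt))) := by
      have h1 : Rm1 (j (i x)) = g (x : Xt) := by
        apply he
        rw [← RC (i x), hei x, heg]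
      obtain ⟨hd, hv⟩ := hRm1.1 (j (i x))
      have hjz : (j.comp Rm1) (j (i x)) = j (g (x : Xt)) := congrArg _ h1
      have hs : (⟨(j.comp Rm1) (j (i x)), hd⟩ : Am1.domain)
          = ⟨j (g (x : Xt)), hXdom (g (x : Xt))⟩ := Subtype.ext hjz
      rw [hs, hjz] at hv
      -- hv : l0 • j (g x) - Am1 ⟨j (g x), _⟩ = j (i x)
      have h2 : Am1 ⟨j (g (x : Xt)), hXdom (g (x : Xt))⟩ = j (l0 • g (x : Xt) - i x) := by
        rw [map_sub, _root_.map_smul, sub_eq_iff_eq_add.mp hv]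
        abel
      rw [h2]
      refine congrArg _ ?_
      apply he
      rw [map_sub, _root_.map_smul, heg, heg, hei]
      have h3 := hRt.2 x
      rw [map_sub, _root_.map_smul] at h3
      rw [sub_eq_iff_eq_add] at h3
      rw [h3]
      abel
    have hstar : j (Rm1 (l0 • kL (x : Xt) - Am1 ⟨kL (x : Xt), h⟩)) = kL (x : Xt) :=
      hRm1.2 ⟨kL (x : Xt), h⟩
    have hclaim : j (Rm1 (l0 • kL (x : Xt) - kL ((At x : Xt)))) = kL (x : Xt) := by
      rw [map_sub, _root_.map_smul, map_sub, _root_.map_smul]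
      have h2 : j (Rm1 (kL (x : Xt))) = j (g (x : Xt)) := (key _ _).1 rfl
      have h3 : j (Rm1 (kL ((At x : Xt)))) = j (g ((At x : Xt))) := (key _ _).1 rfl
      rw [h2, h3, ← KL]
      exact (hkLdef (x : Xt)).symm
    have h5 : l0 • kL (x : Xt) - Am1 ⟨kL (x : Xt), h⟩
        = l0 • kL (x : Xt) - kL ((At x : Xt)) :=
      hjRinj _ _ (hstar.trans hclaim.symm)
    exact sub_right_injective h5
end
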